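/- arXiv:2105.00761 — 8 statements merged into one kernel-verified Lean document; each statement's English description precedes it below -/
import Mathlib

section
/- Let 𝔽 be a finite field with exactly n elements, let A ∈ 𝔽^{a×b} be a matrix, and let v ∈ 𝔽^a lie in the image of the linear map w ↦ A·w. Then for every index i ∈ [b] such that the i-th standard unit vector e_i does not lie in the span of the rows of A, and every y ∈ 𝔽, the probability over a uniformly random f ∈ 𝔽^b that f_i = y, conditioned on A·f = v, is exactly 1/n. Equivalently, n · |{f ∈ 𝔽^b : A·f = v and f_i = y}| = |{f ∈ 𝔽^b : A·f = v}|. -/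
lemma aux_exists_ker_vec {𝔽 : Type} [Field 𝔽] {a b : ℕ}
    (A : Matrix (Fin a) (Fin b) 𝔽) (i : Fin b)
    (hi : (Pi.single i (1 : 𝔽) : Fin b → 𝔽) ∉
      Submodule.span 𝔽 (Set.range fun r : Fin a => A r)) :
    ∃ g : Fin b → 𝔽, A.mulVec g = 0 ∧ g i = 1 := by
  by_contra h
  push_neg at h
  have hker : ∀ g : Fin b → 𝔽, A.mulVec g = 0 → g i = 0 := by
    intro g hg
    by_contra hgi
    exact h ((g i)⁻¹ • g) (by rw [Matrix.mulVec_smul, hg, smul_zero])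
      (by simp [inv_mul_cancel₀ hgi])
  -- dual argument
  set L : Fin a → (Fin b → 𝔽) →ₗ[𝔽] 𝔽 :=
    fun r => (LinearMap.proj r).comp A.mulVecLin with hL
  set K : (Fin b → 𝔽) →ₗ[𝔽] 𝔽 := LinearMap.proj i with hK
  have hle : ⨅ r, LinearMap.ker (L r) ≤ LinearMap.ker K := by
    intro g hg
    simp only [Submodule.mem_iInf, LinearMap.mem_ker, hL, LinearMap.comp_apply,
      LinearMap.proj_apply, Matrix.mulVecLin_apply] at hg
    have : A.mulVec g = 0 := funext hg
    simpa [hK] using hker g this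
  have hmem := mem_span_of_iInf_ker_le_ker (𝕜 := 𝔽) hle
  obtain ⟨c, hc⟩ := (Submodule.mem_span_range_iff_exists_fun 𝔽).1 hmem
  apply hi
  refine (Submodule.mem_span_range_iff_exists_fun 𝔽).2 ⟨c, ?_⟩
  funext j
  have := LinearMap.congr_fun hc (Pi.single j 1)
  simp only [LinearMap.coe_sum, Finset.sum_apply, LinearMap.smul_apply, hL, hK,
    LinearMap.comp_apply, LinearMap.proj_apply, Matrix.mulVecLin_apply,
    Matrix.mulVec_single, MulOpposite.op_one, one_smul, Matrix.col_apply, smul_eq_mul, mul_one] at this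
  simp only [Finset.sum_apply, Pi.smul_apply, smul_eq_mul]
  rw [this]
  by_cases hij : j = i <;> simp [Pi.single_apply, hij, eq_comm]


/-- Let `𝔽` be a finite field with exactly `n` elements, `A` an `a × b`
matrix over `𝔽`, and `v` in the image of `w ↦ A ⬝ w`. If the `i`-th standard unit vector is
not in the row span of `A`, then for every `y`, conditioned on `A ⬝ f = v`, a uniformly
random `f ∈ 𝔽^b` satisfies `f i = y` with probability exactly `1/n`; equivalently,
`n * |{f : A ⬝ f = v ∧ f i = y}| = |{f : A ⬝ f = v}|`. -/
theorem stmt_0 {𝔽 : Type} [Field 𝔽] [Fintype 𝔽] (n a b : ℕ)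
    (hn : Fintype.card 𝔽 = n)
    (A : Matrix (Fin a) (Fin b) 𝔽) (v : Fin a → 𝔽)
    (hv : ∃ w : Fin b → 𝔽, A.mulVec w = v)
    (i : Fin b)
    (hi : (Pi.single i (1 : 𝔽) : Fin b → 𝔽) ∉
      Submodule.span 𝔽 (Set.range fun r : Fin a => A r))
    (y : 𝔽) :
    n * Nat.card {f : Fin b → 𝔽 // A.mulVec f = v ∧ f i = y}
      = Nat.card {f : Fin b → 𝔽 // A.mulVec f = v} := by
  classical
  obtain ⟨g, hg, hgi⟩ := aux_exists_ker_vec A i hi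
  have e : {f : Fin b → 𝔽 // A.mulVec f = v} ≃
      𝔽 × {f : Fin b → 𝔽 // A.mulVec f = v ∧ f i = y} :=
    { toFun := fun f => ⟨f.1 i, ⟨f.1 + (y - f.1 i) • g,
        by simp [Matrix.mulVec_add, Matrix.mulVec_smul, hg, f.2], by simp [hgi]⟩⟩
      invFun := fun p => ⟨p.2.1 + (p.1 - y) • g,
        by simp [Matrix.mulVec_add, Matrix.mulVec_smul, hg, p.2.2.1]⟩
      left_inv := fun f => by
        ext x
        simp only [Pi.add_apply, Pi.smul_apply, hgi, smul_eq_mul]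
        ring
      right_inv := fun p => by
        have h2 := p.2.2.2
        refine Prod.ext ?_ (Subtype.ext (funext fun x => ?_))
        · simp [hgi, h2]
        · simp only [Pi.add_apply, Pi.smul_apply, hgi, smul_eq_mul, h2]
          ring }
  rw [Nat.card_congr e, Nat.card_prod, Nat.card_eq_fintype_card (α := 𝔽), hn]
end

section
/- Let 𝔽 be a finite field and let n, ℓ, c ∈ ℕ. For every matrix A ∈ 𝔽^{ℓ×n} there exists a set S_A ⊆ [n] with |S_A| ≤ ℓ such that for every matrix B ∈ 𝔽^{c×n} there exists a set S_B ⊆ [n] with |S_B| ≤ c satisfying E(stack(A,B)) ⊆ S_A ∪ S_B, where stack(A,B) ∈ 𝔽^{(ℓ+c)×n} is the matrix whose rows are the rows of A followed by the rows of B. -/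
open Submodule Module

/-- Key auxiliary lemma: any submodule `R` of `Fin n → 𝔽` admits a set `S` of
at most `finrank R` coordinates on which it is "supported": any element of `R`
vanishing on `S` is zero. -/
lemma exists_coord_finset {𝔽 : Type} [Field 𝔽] {n : ℕ} :
    ∀ (k : ℕ) (R : Submodule 𝔽 (Fin n → 𝔽)), Module.finrank 𝔽 R = k →
      ∃ S : Finset (Fin n), S.card ≤ k ∧
        ∀ v ∈ R, (∀ j ∈ S, v j = 0) → v = 0 := by
  intro k
  induction k using Nat.strong_induction_on with
  | _ k ih =>
    intro R hR
    by_cases hbot : R = ⊥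
    · exact ⟨∅, Nat.zero_le _, fun v hv _ => by simpa [hbot] using hv⟩
    · obtain ⟨v, hvR, hv0⟩ := Submodule.exists_mem_ne_zero_of_ne_bot hbot
      obtain ⟨j, hj⟩ : ∃ j, v j ≠ 0 := by
        by_contra h
        push_neg at h
        exact hv0 (funext h)
      set R' := R ⊓ LinearMap.ker (LinearMap.proj j : (Fin n → 𝔽) →ₗ[𝔽] 𝔽) with hR'
      have hlt : R' < R := by
        refine lt_of_le_of_ne inf_le_left ?_
        intro h
        have : v ∈ R' := h ▸ hvR
        exact hj this.2
      have hfd : Module.finrank 𝔽 R' < k := by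
        rw [← hR]
        exact Submodule.finrank_lt_finrank_of_lt hlt
      obtain ⟨S', hS'c, hS'⟩ := ih _ hfd R' rfl
      refine ⟨insert j S', ?_, ?_⟩
      · calc (insert j S').card ≤ S'.card + 1 := Finset.card_insert_le _ _
          _ ≤ Module.finrank 𝔽 R' + 1 := by omega
          _ ≤ k := by omega
      · intro w hw hwz
        have hwj : w j = 0 := hwz j (Finset.mem_insert_self _ _)
        have hw' : w ∈ R' := ⟨hw, hwj⟩
        exact hS' w hw' fun i hi => hwz i (Finset.mem_insert_of_mem hi)

/-- For every `ℓ × n` matrix `A` over a field `𝔽` there is a set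
`S_A ⊆ [n]` of size at most `ℓ` such that for every `c × n` matrix `B` there is a set
`S_B ⊆ [n]` of size at most `c` with `E(stack(A,B)) ⊆ S_A ∪ S_B`, where `E(M)` is the set
of indices `j` whose standard unit vector `e_j` lies in the span of the rows of `M`
(the rows of `stack(A,B)` being the rows of `A` followed by the rows of `B`). -/
theorem stmt_1 {𝔽 : Type} [Field 𝔽] (n ℓ c : ℕ)
    (A : Matrix (Fin ℓ) (Fin n) 𝔽) :
    ∃ SA : Finset (Fin n), SA.card ≤ ℓ ∧
      ∀ B : Matrix (Fin c) (Fin n) 𝔽, ∃ SB : Finset (Fin n), SB.card ≤ c ∧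
        ∀ j : Fin n,
          (Pi.single j (1 : 𝔽) : Fin n → 𝔽) ∈
            Submodule.span 𝔽
              ((Set.range fun r : Fin ℓ => A r) ∪ (Set.range fun r : Fin c => B r)) →
          j ∈ SA ∪ SB := by
  classical
  set R : Submodule 𝔽 (Fin n → 𝔽) := Submodule.span 𝔽 (Set.range fun r : Fin ℓ => A r) with hRdef
  obtain ⟨SA, hSAcard, hSA⟩ := exists_coord_finset (Module.finrank 𝔽 R) R rfl
  have hRrank : Module.finrank 𝔽 R ≤ ℓ :=
    (finrank_range_le_card _).trans (by simp)
  refine ⟨SA, hSAcard.trans hRrank, ?_⟩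
  intro B
  set W : Submodule 𝔽 (Fin n → 𝔽) :=
    Submodule.span 𝔽 ((Set.range fun r : Fin ℓ => A r) ∪ (Set.range fun r : Fin c => B r)) with hWdef
  set SB : Finset (Fin n) :=
    Finset.univ.filter (fun j => (Pi.single j (1 : 𝔽) : Fin n → 𝔽) ∈ W ∧ j ∉ SA) with hSBdef
  have hmemSB : ∀ j : Fin n, j ∈ SB ↔ ((Pi.single j (1 : 𝔽) : Fin n → 𝔽) ∈ W ∧ j ∉ SA) := by
    intro j; simp [hSBdef]
  refine ⟨SB, ?_, ?_⟩
  · -- card bound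
    set q : (Fin n → 𝔽) →ₗ[𝔽] ((Fin n → 𝔽) ⧸ R) := R.mkQ with hq
    set W' : Submodule 𝔽 ((Fin n → 𝔽) ⧸ R) := W.map q with hW'
    have hmemW' : ∀ j ∈ SB, q (Pi.single j (1 : 𝔽)) ∈ W' := by
      intro j hj
      exact Submodule.mem_map_of_mem ((hmemSB j).1 hj).1
    have hindep : LinearIndependent 𝔽 (fun j : SB => q (Pi.single (j : Fin n) (1 : 𝔽))) := by
      rw [Fintype.linearIndependent_iff]
      intro g hg j
      set v : Fin n → 𝔽 := ∑ i : SB, g i • (Pi.single (i : Fin n) (1 : 𝔽) : Fin n → 𝔽) with hv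
      have hvR : v ∈ R := by
        have : q v = 0 := by
          rw [hv, map_sum]
          simpa using hg
        rwa [hq, ← LinearMap.mem_ker, Submodule.ker_mkQ] at this
      have hvapp : ∀ i : Fin n, v i = ∑ x : SB, (if i = (x : Fin n) then g x else 0) := by
        intro i
        rw [hv]
        simp [Finset.sum_apply, Pi.single_apply]
      have hvzero : v = 0 := by
        apply hSA v hvR
        intro i hiSA
        rw [hvapp i]
        apply Finset.sum_eq_zero
        intro x _
        have hne : i ≠ (x : Fin n) := by
          intro h
          exact ((hmemSB x).1 x.2).2 (h ▸ hiSA)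
        simp [hne]
      have := hvapp j
      rw [hvzero] at this
      simp only [Pi.zero_apply] at this
      rw [Finset.sum_eq_single j] at this
      · simpa using this.symm
      · intro b _ hb
        have hne : (j : Fin n) ≠ (b : Fin n) := fun h => hb (Subtype.ext h.symm)
        simp [hne]
      · simp
    have hcard : SB.card ≤ Module.finrank 𝔽 W' := by
      have hind' : LinearIndependent 𝔽
          (fun j : SB => (⟨q (Pi.single (j : Fin n) (1 : 𝔽)), hmemW' j j.2⟩ : W')) := by
        apply LinearIndependent.of_comp W'.subtype
        exact hindep
      simpa using hind'.fintype_card_le_finrank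
    have hW'le : Module.finrank 𝔽 W' ≤ c := by
      have hWsup : W = R ⊔ Submodule.span 𝔽 (Set.range fun r : Fin c => B r) := by
        rw [hWdef, Submodule.span_union, hRdef]
      have hmapR : R.map q = ⊥ := by
        rw [hq, Submodule.mkQ_map_self]
      have : W' = (Submodule.span 𝔽 (Set.range fun r : Fin c => B r)).map q := by
        rw [hW', hWsup, Submodule.map_sup, hmapR, bot_sup_eq]
      rw [this]
      calc Module.finrank 𝔽 ((Submodule.span 𝔽 (Set.range fun r : Fin c => B r)).map q)
          ≤ Module.finrank 𝔽 (Submodule.span 𝔽 (Set.range fun r : Fin c => B r)) :=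
            Submodule.finrank_map_le _ _
        _ ≤ c := (finrank_range_le_card _).trans (by simp)
    exact hcard.trans hW'le
  · intro j hj
    by_cases hjSA : j ∈ SA
    · exact Finset.mem_union_left _ hjSA
    · exact Finset.mem_union_right _ ((hmemSB j).2 ⟨hj, hjSA⟩)
end

section
/- Let n, c ∈ ℕ with c ≥ 1, let S_1, …, S_n ⊆ [n] be sets each of size at most c, and for f : [n] → [n] let K_f := {y ∈ [n] : y ∈ f(S_y)}, where f(S) := {f(x) : x ∈ S}. Then for every μ ∈ (0, 1/2], the probability over a uniformly random function f : [n] → [n] that |K_f| ≥ μn is at most 2^{2⌈μn⌉·log₂(1/μ) + ⌈μn⌉·log₂(c/n)}. -/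
section AuxStmt2
open Finset

lemma count_aux (n k : ℕ) (T : Finset (Fin n)) (hT : T.card = k)
    (g : (y : Fin n) → y ∈ T → Fin n)
    [DecidablePred (fun f : Fin n → Fin n => ∀ y (h : y ∈ T), f (g y h) = y)] :
    (univ.filter (fun f : Fin n → Fin n => ∀ y (h : y ∈ T), f (g y h) = y)).card
      ≤ n ^ (n - k) := by
  classical
  set C := univ.filter (fun f : Fin n → Fin n => ∀ y (h : y ∈ T), f (g y h) = y) with hC
  rcases C.eq_empty_or_nonempty with h | ⟨f₀, hf₀⟩
  · simp [h]
  · have hf₀' : ∀ y (h : y ∈ T), f₀ (g y h) = y := by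
      have := mem_filter.mp hf₀; exact this.2
    set G : Finset (Fin n) := T.attach.image (fun y => g y.1 y.2) with hG
    have hGcard : G.card = k := by
      rw [hG, card_image_of_injOn, card_attach, hT]
      intro a _ b _ hab
      have h1 := hf₀' a.1 a.2
      have h2 := hf₀' b.1 b.2
      dsimp only at hab
      rw [hab] at h1
      exact Subtype.ext (h1.symm.trans h2)
    have hinj : Function.Injective
        (fun (f : ↥C) (x : ↥(Gᶜ : Finset (Fin n))) => f.1 x.1) := by
      intro f₁ f₂ h
      apply Subtype.ext
      funext x
      by_cases hx : x ∈ G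
      · obtain ⟨y, hy, hyx⟩ := mem_image.mp hx
        have e1 : f₁.1 x = y.1 := by rw [← hyx]; exact (mem_filter.mp f₁.2).2 y.1 y.2
        have e2 : f₂.1 x = y.1 := by rw [← hyx]; exact (mem_filter.mp f₂.2).2 y.1 y.2
        rw [e1, e2]
      · exact congrFun h ⟨x, mem_compl.mpr hx⟩
    have := Fintype.card_le_of_injective _ hinj
    rw [Fintype.card_coe] at this
    calc C.card ≤ Fintype.card (↥(Gᶜ : Finset (Fin n)) → Fin n) := this
      _ = n ^ (n - k) := by
          rw [Fintype.card_fun, Fintype.card_coe, card_compl, hGcard,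
            Fintype.card_fin]

lemma count_main (n c k : ℕ) (S : Fin n → Finset (Fin n)) (hS : ∀ y, (S y).card ≤ c) :
    (univ.filter (fun f : Fin n → Fin n =>
        k ≤ (univ.filter (fun y => y ∈ (S y).image f)).card)).card
      ≤ n.choose k * (c ^ k * n ^ (n - k)) := by
  classical
  have step2 : ∀ T ∈ powersetCard k (univ : Finset (Fin n)),
      (univ.filter (fun f : Fin n → Fin n => ∀ y ∈ T, y ∈ (S y).image f)).card
        ≤ c ^ k * n ^ (n - k) := by
    intro T hT
    obtain ⟨-, hTcard⟩ := mem_powersetCard.mp hT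
    have sub : univ.filter (fun f : Fin n → Fin n => ∀ y ∈ T, y ∈ (S y).image f) ⊆
        (T.pi (fun y => S y)).biUnion (fun g =>
          univ.filter (fun f => ∀ y (h : y ∈ T), f (g y h) = y)) := by
      intro f hf
      have hf' : ∀ y (h : y ∈ T), ∃ x, x ∈ S y ∧ f x = y := by
        intro y h
        obtain ⟨x, hx, hfx⟩ := mem_image.mp ((mem_filter.mp hf).2 y h)
        exact ⟨x, hx, hfx⟩
      choose g hg1 hg2 using hf'
      refine mem_biUnion.mpr ⟨g, mem_pi.mpr (fun y h => hg1 y h), ?_⟩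
      exact mem_filter.mpr ⟨mem_univ f, hg2⟩
    calc (univ.filter (fun f : Fin n → Fin n => ∀ y ∈ T, y ∈ (S y).image f)).card
        ≤ ∑ g ∈ T.pi (fun y => S y),
            (univ.filter (fun f : Fin n → Fin n => ∀ y (h : y ∈ T), f (g y h) = y)).card :=
          le_trans (card_le_card sub) (card_biUnion_le)
      _ ≤ ∑ _g ∈ T.pi (fun y => S y), n ^ (n - k) :=
          sum_le_sum (fun g _ => count_aux n k T hTcard g)
      _ = (T.pi (fun y => S y)).card * n ^ (n - k) := by rw [sum_const, smul_eq_mul]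
      _ ≤ c ^ k * n ^ (n - k) := by
          apply Nat.mul_le_mul_right
          rw [Finset.card_pi]
          calc ∏ y ∈ T, (S y).card ≤ ∏ _y ∈ T, c := prod_le_prod' (fun y _ => hS y)
            _ = c ^ k := by rw [prod_const, hTcard]
  calc (univ.filter (fun f : Fin n → Fin n =>
        k ≤ (univ.filter (fun y => y ∈ (S y).image f)).card)).card
      ≤ ((powersetCard k (univ : Finset (Fin n))).biUnion (fun T =>
          univ.filter (fun f : Fin n → Fin n => ∀ y ∈ T, y ∈ (S y).image f))).card := by
        apply card_le_card
        intro f hf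
        obtain ⟨T, hTsub, hTcard⟩ := exists_subset_card_eq (mem_filter.mp hf).2
        refine mem_biUnion.mpr ⟨T, mem_powersetCard.mpr ⟨subset_univ T, hTcard⟩, ?_⟩
        refine mem_filter.mpr ⟨mem_univ f, fun y hy => ?_⟩
        exact (mem_filter.mp (hTsub hy)).2
    _ ≤ ∑ T ∈ powersetCard k (univ : Finset (Fin n)),
          (univ.filter (fun f : Fin n → Fin n => ∀ y ∈ T, y ∈ (S y).image f)).card :=
        card_biUnion_le
    _ ≤ ∑ _T ∈ powersetCard k (univ : Finset (Fin n)), c ^ k * n ^ (n - k) :=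
        sum_le_sum step2
    _ = n.choose k * (c ^ k * n ^ (n - k)) := by
        rw [sum_const, smul_eq_mul, card_powersetCard, card_univ, Fintype.card_fin]


lemma binom_term_le_one (n k : ℕ) (hk2 : k ≤ n) (μ : ℝ) (hμ0 : 0 ≤ μ) (hμ1 : μ ≤ 1) :
    (n.choose k : ℝ) * (μ ^ k * (1-μ) ^ (n-k)) ≤ 1 := by
  have h := add_pow μ (1-μ) n
  rw [add_sub_cancel, one_pow] at h
  have h1 : (0:ℝ) ≤ 1 - μ := by linarith
  have hs := single_le_sum (f := fun i => μ ^ i * (1-μ) ^ (n-i) * (n.choose i : ℝ))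
    (fun i _ => by positivity) (mem_range.mpr (Nat.lt_succ_of_le hk2))
  calc (n.choose k : ℝ) * (μ ^ k * (1-μ) ^ (n-k))
      = μ ^ k * (1-μ) ^ (n-k) * (n.choose k : ℝ) := by ring
    _ ≤ ∑ m ∈ range (n + 1), μ ^ m * (1 - μ) ^ (n - m) * (n.choose m : ℝ) := hs
    _ ≤ 1 := h.ge

lemma choose_bound (n k : ℕ) (μ : ℝ) (hμ0 : 0 < μ) (hμ : μ ≤ 1/2)
    (hk1 : μ * n ≤ k) (hk2 : k ≤ n) :
    (n.choose k : ℝ) ≤ (1/μ) ^ (2*k) := by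
  have h1μ : (0:ℝ) < 1 - μ := by linarith
  have hμk : (0:ℝ) < μ ^ (2*k) := pow_pos hμ0 _
  have hnk : ((n - k : ℕ) : ℝ) = (n:ℝ) - k := by
    rw [Nat.cast_sub hk2]
  rw [div_pow, one_pow, le_div_iff₀ hμk]
  rcases le_or_gt μ (Real.exp (-1)) with hcase | hcase
  · -- small μ: use binomial at μ and (1-μ)^{n-k} ≥ e^{-k} ≥ μ^k
    have key : μ ^ k ≤ (1-μ) ^ (n-k) := by
      have e1 : μ ^ k ≤ Real.exp (-1) ^ k := pow_le_pow_left₀ hμ0.le hcase k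
      have e2 : Real.exp (-(μ/(1-μ))) ≤ 1 - μ := by
        rw [Real.exp_neg, inv_le_comm₀ (Real.exp_pos _) h1μ]
        calc (1-μ)⁻¹ = μ/(1-μ) + 1 := by field_simp; ring
          _ ≤ Real.exp (μ/(1-μ)) := Real.add_one_le_exp _
      have e3 : Real.exp (-(μ/(1-μ))) ^ (n-k) ≤ (1-μ) ^ (n-k) :=
        pow_le_pow_left₀ (Real.exp_pos _).le e2 _
      rw [← Real.exp_nat_mul] at e3
      have e4 : Real.exp (-1) ^ k ≤ Real.exp ((n-k : ℕ) * (-(μ/(1-μ)))) := by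
        rw [← Real.exp_nat_mul, Real.exp_le_exp]
        rw [hnk]
        have hnkle : (n:ℝ) - k ≤ (1-μ) * n := by nlinarith
        have : ((n:ℝ) - k) * (μ/(1-μ)) ≤ (k:ℝ) := by
          calc ((n:ℝ) - k) * (μ/(1-μ)) ≤ ((1-μ) * n) * (μ/(1-μ)) := by
                apply mul_le_mul_of_nonneg_right hnkle
                positivity
            _ = μ * n := by field_simp
            _ ≤ k := hk1
        nlinarith
      calc μ ^ k ≤ Real.exp (-1) ^ k := e1
        _ ≤ Real.exp ((n-k : ℕ) * (-(μ/(1-μ)))) := e4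
        _ ≤ (1-μ) ^ (n-k) := e3
    have hb := binom_term_le_one n k hk2 μ hμ0.le (by linarith)
    calc (n.choose k : ℝ) * μ ^ (2*k) = (n.choose k : ℝ) * (μ ^ k * μ ^ k) := by
          rw [two_mul, pow_add]
      _ ≤ (n.choose k : ℝ) * (μ ^ k * (1-μ) ^ (n-k)) := by
          apply mul_le_mul_of_nonneg_left _ (Nat.cast_nonneg _)
          apply mul_le_mul_of_nonneg_left key (pow_nonneg hμ0.le _)
      _ ≤ 1 := hb
  · -- large μ: choose ≤ 2^n ≤ μ^{-2k}
    rcases Nat.eq_zero_or_pos n with hn | hn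
    · subst hn
      interval_cases k
      simp
    have hch : (n.choose k : ℝ) ≤ 2 ^ n := by
      have : n.choose k ≤ 2 ^ n := by
        rw [← Nat.sum_range_choose n]
        exact single_le_sum (f := fun i => n.choose i) (fun i _ => Nat.zero_le _)
          (mem_range.mpr (Nat.lt_succ_of_le hk2))
      exact_mod_cast this
    -- suffices 2^n * μ^(2k) ≤ 1
    have hlog : Real.log 2 ≤ 2 * μ * (-Real.log μ) := by
      have hl2 : Real.log (2*μ) ≤ 2*μ - 1 := Real.log_le_sub_one_of_pos (by linarith)
      have hsplit : Real.log (2*μ) = Real.log 2 + Real.log μ :=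
        Real.log_mul two_ne_zero hμ0.ne'
      have hμe : Real.exp (-1) < μ := hcase
      have h2μ : Real.log 2 ≤ 2 * μ := by
        have he : Real.exp (-1) = (Real.exp 1)⁻¹ := by rw [Real.exp_neg]
        have h1 : Real.log 2 < 0.6931471808 := Real.log_two_lt_d9
        have h2 : Real.exp 1 < 2.7182818286 := Real.exp_one_lt_d9
        have h3 : (0:ℝ) < Real.exp 1 := Real.exp_pos 1
        have : (2.7182818286:ℝ)⁻¹ < μ := by
          apply lt_of_le_of_lt _ hμe
          rw [he]
          apply inv_anti₀ h3 h2.le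
        nlinarith
      nlinarith [hsplit, hl2]
    have h2n : (2:ℝ) ^ n * μ ^ (2*k) ≤ 1 := by
      have l1 : Real.log ((2:ℝ) ^ n * μ ^ (2*k)) ≤ 0 := by
        rw [Real.log_mul (by positivity) (by positivity), Real.log_pow, Real.log_pow]
        have : (2*k : ℕ) * Real.log μ ≤ (n:ℝ) * (2 * μ * Real.log μ) := by
          have hlogμ : Real.log μ < 0 := Real.log_neg hμ0 (by linarith)
          have : (n:ℝ) * (2*μ) ≤ (2*k : ℕ) := by
            push_cast
            nlinarith
          nlinarith
        nlinarith [hlog, Nat.cast_nonneg (α := ℝ) n]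
      have := Real.exp_le_exp.mpr l1
      rw [Real.exp_log (by positivity), Real.exp_zero] at this
      exact this
    calc (n.choose k : ℝ) * μ ^ (2*k) ≤ (2:ℝ)^n * μ ^ (2*k) :=
          mul_le_mul_of_nonneg_right hch hμk.le
      _ ≤ 1 := h2n


/-- Let `S_1, …, S_n ⊆ [n]` each have size at most `c ≥ 1`, and for
`f : [n] → [n]` let `K_f := {y : y ∈ f(S_y)}`. Then for every `μ ∈ (0, 1/2]`, the
probability over a uniformly random `f` that `|K_f| ≥ μ n` is at most
`2 ^ (2⌈μn⌉ log₂(1/μ) + ⌈μn⌉ log₂(c/n))`. -/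
theorem stmt_2 (n c : ℕ) (hc : 1 ≤ c)
    (S : Fin n → Finset (Fin n)) (hS : ∀ y, (S y).card ≤ c)
    (μ : ℝ) (hμ0 : 0 < μ) (hμ : μ ≤ 1 / 2) :
    (Nat.card {f : Fin n → Fin n //
        μ * n ≤ (Nat.card {y : Fin n // y ∈ (S y).image f} : ℝ)} : ℝ)
      / (Nat.card (Fin n → Fin n)) ≤
    (2 : ℝ) ^ (2 * (⌈μ * n⌉₊ : ℝ) * Real.logb 2 (1 / μ)
        + (⌈μ * n⌉₊ : ℝ) * Real.logb 2 (c / n)) := by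
  classical
  set k := ⌈μ * n⌉₊ with hkdef
  have hμ1 : μ ≤ 1 := by linarith
  have hnn : (0:ℝ) ≤ (n:ℝ) := Nat.cast_nonneg n
  have hk2 : k ≤ n := Nat.ceil_le.mpr (by nlinarith)
  have hk1 : μ * n ≤ k := Nat.le_ceil _
  have hnum : Nat.card {f : Fin n → Fin n //
      μ * n ≤ (Nat.card {y : Fin n // y ∈ (S y).image f} : ℝ)}
      = (univ.filter (fun f : Fin n → Fin n =>
          k ≤ (univ.filter (fun y => y ∈ (S y).image f)).card)).card := by
    have he : ∀ f : Fin n → Fin n,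
        (μ * n ≤ (Nat.card {y : Fin n // y ∈ (S y).image f} : ℝ)) ↔
        (k ≤ (univ.filter (fun y => y ∈ (S y).image f)).card) := by
      intro f
      rw [Nat.card_eq_fintype_card, Fintype.card_subtype]
      exact Nat.ceil_le.symm
    rw [Nat.card_congr (Equiv.subtypeEquivRight he), Nat.card_eq_fintype_card,
      Fintype.card_subtype]
  have hden : Nat.card (Fin n → Fin n) = n ^ n := by
    simp [Nat.card_eq_fintype_card, Fintype.card_fun]
  rcases Nat.eq_zero_or_pos n with hn | hn
  · subst hn
    have hk0 : k = 0 := by omega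
    rw [hnum, hden, hk0]
    norm_num
  have hn0 : (0:ℝ) < n := by exact_mod_cast hn
  have hc0 : (0:ℝ) < c := by exact_mod_cast hc
  have hRHS : (2:ℝ) ^ (2 * (k:ℝ) * Real.logb 2 (1/μ) + (k:ℝ) * Real.logb 2 ((c:ℝ)/n))
      = (1/μ)^(2*k) * ((c:ℝ)/n)^k := by
    rw [Real.rpow_add two_pos]
    congr 1
    · rw [mul_comm (2*(k:ℝ)) _, Real.rpow_mul (by norm_num : (0:ℝ) ≤ 2),
        Real.rpow_logb two_pos (by norm_num) (by positivity)]
      rw [← Real.rpow_natCast (1/μ) (2*k)]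
      push_cast
      ring_nf
    · rw [mul_comm ((k:ℝ)) _, Real.rpow_mul (by norm_num : (0:ℝ) ≤ 2),
        Real.rpow_logb two_pos (by norm_num) (by positivity)]
      rw [← Real.rpow_natCast ((c:ℝ)/n) k]
  rw [hnum, hden, hRHS]
  rw [div_le_iff₀ (by positivity)]
  have hpow : ((n:ℝ))^n = (n:ℝ)^k * (n:ℝ)^(n-k) := by
    rw [← pow_add, Nat.add_sub_cancel' hk2]
  calc ((univ.filter (fun f : Fin n → Fin n =>
        k ≤ (univ.filter (fun y => y ∈ (S y).image f)).card)).card : ℝ)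
      ≤ ((n.choose k * (c ^ k * n ^ (n - k)) : ℕ) : ℝ) := by
        exact_mod_cast count_main n c k S hS
    _ = (n.choose k : ℝ) * ((c:ℝ)^k * (n:ℝ)^(n-k)) := by push_cast; ring
    _ ≤ (1/μ)^(2*k) * ((c:ℝ)^k * (n:ℝ)^(n-k)) := by
        apply mul_le_mul_of_nonneg_right (choose_bound n k μ hμ0 hμ hk1 hk2)
        positivity
    _ = (1/μ)^(2*k) * ((c:ℝ)/n)^k * ((n^n : ℕ) : ℝ) := by
        push_cast
        rw [div_pow, hpow]
        field_simp
        ring_nf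
        rw [mul_assoc, ← mul_pow, mul_inv_cancel₀ hn0.ne', one_pow, mul_one]

end AuxStmt2
end

section
/- For every n ∈ ℕ, τ ∈ [0, 1/2] and δ ∈ (0, 1/2], the probability over a uniformly random function f : [n] → [n] that there exists a set X ⊆ [n] with |X| ≥ τn and |f(X)| ≤ δn is at most 2^{n(h(τ) + h(δ)) + ⌊τn⌋·log₂ δ}, where f(X) := {f(x) : x ∈ X}. -/
open Finset Real


/-- The binary entropy function `h(x) = -x log₂ x - (1-x) log₂ (1-x)`
(with `h 0 = h 1 = 0`, since `Real.logb 2 0 = 0`). -/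
noncomputable def binEnt (x : ℝ) : ℝ :=
  -(x * Real.logb 2 x) - (1 - x) * Real.logb 2 (1 - x)

lemma binom_one (p : ℝ) (hp0 : 0 ≤ p) (hp1 : p ≤ 1) (n m : ℕ) (hm : m ≤ n) :
    (n.choose m : ℝ) * (p ^ m * (1 - p) ^ (n - m)) ≤ 1 := by
  have h : ((p + (1 - p)) : ℝ) ^ n = 1 := by ring_nf
  calc (n.choose m : ℝ) * (p ^ m * (1 - p) ^ (n - m))
      = p ^ m * (1 - p) ^ (n - m) * (n.choose m : ℝ) := by ring
    _ ≤ ∑ k ∈ Finset.range (n+1), p ^ k * (1 - p) ^ (n - k) * (n.choose k : ℝ) := by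
        apply Finset.single_le_sum (f := fun k => p ^ k * (1-p) ^ (n-k) * (n.choose k : ℝ))
        · intro i _
          have : (0:ℝ) ≤ 1 - p := by linarith
          positivity
        · exact Finset.mem_range.mpr (Nat.lt_succ_of_le hm)
    _ = 1 := by rw [← add_pow]; exact h

lemma choose_le_rpow (n m : ℕ) (p : ℝ) (hp0 : 0 ≤ p) (hp : p ≤ 1/2) (hm : (m:ℝ) ≤ p * n) :
    (n.choose m : ℝ) ≤ 2 ^ ((n:ℝ) * binEnt p) := by
  rcases eq_or_lt_of_le hp0 with h0 | hplt
  · -- p = 0 : m = 0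
    have hp' : p = 0 := h0.symm
    subst hp'
    have hm0 : m = 0 := by
      have : (m:ℝ) ≤ 0 := by simpa using hm
      exact_mod_cast le_antisymm (by exact_mod_cast this) (Nat.zero_le m)
    subst hm0
    simp [binEnt, Real.logb_zero]
  · have h1p : 0 < 1 - p := by linarith
    have hmn : m ≤ n := by
      have : (m:ℝ) ≤ (n:ℝ) := le_trans hm (by nlinarith)
      exact_mod_cast this
    have key := binom_one p hp0 (by linarith) n m hmn
    have hpos : (0:ℝ) < p ^ m * (1 - p) ^ (n - m) := by positivity
    have h2 : (n.choose m : ℝ) ≤ 1 / (p ^ m * (1 - p) ^ (n - m)) :=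
      (le_div_iff₀ hpos).mpr key
    have hcast : ((n - m : ℕ) : ℝ) = (n:ℝ) - m := by
      rw [Nat.cast_sub hmn]
    have hppow : p ^ m = (2:ℝ) ^ ((m:ℝ) * Real.logb 2 p) := by
      rw [mul_comm, Real.rpow_mul (by norm_num), Real.rpow_logb (by norm_num) (by norm_num) hplt,
        Real.rpow_natCast]
    have h1ppow : (1-p) ^ (n - m) = (2:ℝ) ^ (((n:ℝ) - m) * Real.logb 2 (1-p)) := by
      rw [mul_comm, Real.rpow_mul (by norm_num), Real.rpow_logb (by norm_num) (by norm_num) h1p,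
        ← hcast, Real.rpow_natCast]
    have hinv : 1 / (p ^ m * (1 - p) ^ (n - m))
        = (2:ℝ) ^ (-((m:ℝ) * Real.logb 2 p) - ((n:ℝ) - m) * Real.logb 2 (1-p)) := by
      rw [hppow, h1ppow, ← Real.rpow_add (by norm_num), one_div,
        ← Real.rpow_neg (by norm_num : (0:ℝ) ≤ 2)]
      congr 1
      ring
    refine h2.trans ?_
    rw [hinv]
    apply Real.rpow_le_rpow_of_exponent_le (by norm_num)
    have hlog : Real.logb 2 p ≤ Real.logb 2 (1 - p) :=
      Real.logb_le_logb_of_le (by norm_num) hplt (by linarith)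
    unfold binEnt
    nlinarith [mul_nonneg (sub_nonneg.mpr hm) (sub_nonneg.mpr hlog)]


lemma count_lemma (n m k : ℕ) (hk : k ≤ n) [DecidablePred fun f : Fin n → Fin n =>
      ∃ X : Finset (Fin n), m ≤ X.card ∧ (X.image f).card ≤ k] :
    (Finset.univ.filter (fun f : Fin n → Fin n =>
      ∃ X : Finset (Fin n), m ≤ X.card ∧ (X.image f).card ≤ k)).card
    ≤ n.choose m * (n.choose k * (k ^ m * n ^ (n - m))) := by
  classical
  set S := (Finset.univ.powersetCard m (α := Fin n)).biUnion (fun X =>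
    (Finset.univ.powersetCard k (α := Fin n)).biUnion (fun Y =>
      Fintype.piFinset (fun a => if a ∈ X then Y else Finset.univ))) with hS
  have hsub : (Finset.univ.filter (fun f : Fin n → Fin n =>
      ∃ X : Finset (Fin n), m ≤ X.card ∧ (X.image f).card ≤ k)) ⊆ S := by
    intro f hf
    obtain ⟨X, hX1, hX2⟩ := (Finset.mem_filter.mp hf).2
    obtain ⟨X', hX'sub, hX'card⟩ := Finset.exists_subset_card_eq hX1
    have himg : (X'.image f).card ≤ k :=
      le_trans (Finset.card_le_card (Finset.image_subset_image hX'sub)) hX2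
    obtain ⟨Y, hY1, hY2, hY3⟩ := Finset.exists_subsuperset_card_eq
      (Finset.subset_univ (X'.image f)) himg (by simpa using hk)
    refine Finset.mem_biUnion.mpr ⟨X', ?_, Finset.mem_biUnion.mpr ⟨Y, ?_, ?_⟩⟩
    · simpa [Finset.mem_powersetCard] using hX'card
    · simpa [Finset.mem_powersetCard] using hY3
    · rw [Fintype.mem_piFinset]
      intro a
      by_cases ha : a ∈ X'
      · simp only [ha, if_true]
        exact hY1 (Finset.mem_image_of_mem f ha)
      · simp [ha]
  refine (Finset.card_le_card hsub).trans ?_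
  refine (Finset.card_biUnion_le).trans ?_
  have hbound : ∀ X ∈ (Finset.univ.powersetCard m (α := Fin n)),
      ((Finset.univ.powersetCard k (α := Fin n)).biUnion (fun Y =>
        Fintype.piFinset (fun a => if a ∈ X then Y else Finset.univ))).card
      ≤ n.choose k * (k ^ m * n ^ (n - m)) := by
    intro X hX
    have hXcard : X.card = m := (Finset.mem_powersetCard.mp hX).2
    refine (Finset.card_biUnion_le).trans ?_
    have hb : ∀ Y ∈ (Finset.univ.powersetCard k (α := Fin n)),
        (Fintype.piFinset (fun a => if a ∈ X then Y else Finset.univ)).card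
        = k ^ m * n ^ (n - m) := by
      intro Y hY
      have hYcard : Y.card = k := (Finset.mem_powersetCard.mp hY).2
      rw [Fintype.card_piFinset]
      have : ∀ a : Fin n, (if a ∈ X then Y else (Finset.univ : Finset (Fin n))).card
          = if a ∈ X then k else n := by
        intro a; by_cases ha : a ∈ X <;> simp [ha, hYcard]
      rw [Finset.prod_congr rfl (fun a _ => this a)]
      rw [Finset.prod_ite, Finset.prod_const, Finset.prod_const, Finset.filter_univ_mem]
      have hcompl : Finset.univ.filter (fun a => ¬ a ∈ X) = Xᶜ := by
        ext a; simp
      rw [hcompl, Finset.card_compl, Fintype.card_fin, hXcard]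
    calc ∑ Y ∈ Finset.univ.powersetCard k, (Fintype.piFinset
          (fun a => if a ∈ X then Y else Finset.univ)).card
        = ∑ Y ∈ Finset.univ.powersetCard k, (k ^ m * n ^ (n - m)) :=
          Finset.sum_congr rfl hb
      _ = (Finset.univ.powersetCard k (α := Fin n)).card * (k ^ m * n ^ (n-m)) := by
          rw [Finset.sum_const, smul_eq_mul]
      _ ≤ n.choose k * (k ^ m * n ^ (n - m)) := by
          rw [Finset.card_powersetCard, Finset.card_univ, Fintype.card_fin]
  calc ∑ X ∈ Finset.univ.powersetCard m, _ ≤ ∑ X ∈ (Finset.univ.powersetCard m (α := Fin n)),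
        (n.choose k * (k ^ m * n ^ (n - m))) := Finset.sum_le_sum hbound
    _ = (Finset.univ.powersetCard m (α := Fin n)).card * (n.choose k * (k ^ m * n ^ (n-m))) := by
        rw [Finset.sum_const, smul_eq_mul]
    _ ≤ n.choose m * (n.choose k * (k ^ m * n ^ (n - m))) := by
        rw [Finset.card_powersetCard, Finset.card_univ, Fintype.card_fin]



/-- For every `n`, `τ ∈ [0,1/2]` and `δ ∈ (0,1/2]`, the probability over
a uniformly random `f : [n] → [n]` that some set `X ⊆ [n]` with `|X| ≥ τn` satisfies
`|f(X)| ≤ δn` is at most `2 ^ (n (h(τ) + h(δ)) + ⌊τn⌋ log₂ δ)`. -/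
theorem stmt_4 (n : ℕ) (τ δ : ℝ) (hτ0 : 0 ≤ τ) (hτ : τ ≤ 1 / 2)
    (hδ0 : 0 < δ) (hδ : δ ≤ 1 / 2) :
    (Nat.card {f : Fin n → Fin n // ∃ X : Finset (Fin n),
        τ * n ≤ (X.card : ℝ) ∧ ((X.image f).card : ℝ) ≤ δ * n} : ℝ)
      / (Nat.card (Fin n → Fin n)) ≤
    (2 : ℝ) ^ ((n : ℝ) * (binEnt τ + binEnt δ) + (⌊τ * n⌋₊ : ℝ) * Real.logb 2 δ) := by
  classical
  rcases Nat.eq_zero_or_pos n with hn | hn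
  · subst hn
    have h1 : ∀ f : Fin 0 → Fin 0, ∃ X : Finset (Fin 0),
        τ * (0:ℕ) ≤ (X.card : ℝ) ∧ ((X.image f).card : ℝ) ≤ δ * (0:ℕ) := by
      intro f; exact ⟨∅, by simp⟩
    have hnum : Nat.card {f : Fin 0 → Fin 0 // ∃ X : Finset (Fin 0),
        τ * (0:ℕ) ≤ (X.card : ℝ) ∧ ((X.image f).card : ℝ) ≤ δ * (0:ℕ)} = 1 := by
      rw [Nat.card_eq_fintype_card, Fintype.card_subtype]
      rw [Finset.filter_true_of_mem (fun f _ => h1 f)]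
      simp
    rw [hnum]
    simp [Real.rpow_natCast]
  have hnpos : (0:ℝ) < n := by exact_mod_cast hn
  set m := ⌊τ * n⌋₊ with hm
  set k := ⌊δ * n⌋₊ with hkdef
  have hmτ : (m:ℝ) ≤ τ * n := Nat.floor_le (by positivity)
  have hkδ : (k:ℝ) ≤ δ * n := Nat.floor_le (by positivity)
  have hkn : k ≤ n := by
    have : (k:ℝ) ≤ (n:ℝ) := hkδ.trans (by nlinarith)
    exact_mod_cast this
  have hmn : m ≤ n := by
    have : (m:ℝ) ≤ (n:ℝ) := hmτ.trans (by nlinarith)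
    exact_mod_cast this
  set P := fun f : Fin n → Fin n => ∃ X : Finset (Fin n),
      τ * n ≤ (X.card : ℝ) ∧ ((X.image f).card : ℝ) ≤ δ * n with hP
  set Q := fun f : Fin n → Fin n => ∃ X : Finset (Fin n),
      m ≤ X.card ∧ (X.image f).card ≤ k with hQ
  have hmono : Finset.univ.filter P ⊆ Finset.univ.filter Q := by
    intro f hf
    obtain ⟨X, h1, h2⟩ := (Finset.mem_filter.mp hf).2
    refine Finset.mem_filter.mpr ⟨Finset.mem_univ f, ⟨X, ?_, ?_⟩⟩
    · have := Nat.floor_mono h1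
      rwa [Nat.floor_natCast] at this
    · exact Nat.le_floor h2
  have hnum : Nat.card {f : Fin n → Fin n // P f} = (Finset.univ.filter P).card := by
    rw [Nat.card_eq_fintype_card, Fintype.card_subtype]
  have hden : Nat.card (Fin n → Fin n) = n ^ n := by
    rw [Nat.card_eq_fintype_card]
    simp [Fintype.card_fun]
  have hcount : (Finset.univ.filter Q).card ≤ n.choose m * (n.choose k * (k ^ m * n ^ (n - m))) :=
    count_lemma n m k hkn
  have hcard : (Finset.univ.filter P).card ≤ n.choose m * (n.choose k * (k ^ m * n ^ (n - m))) :=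
    le_trans (Finset.card_le_card hmono) hcount
  rw [hnum, hden]
  have hstep1 : ((Finset.univ.filter P).card : ℝ) / (n ^ n : ℕ)
      ≤ (n.choose m : ℝ) * (n.choose k) * ((k:ℝ) ^ m / (n:ℝ) ^ m) := by
    rw [div_le_iff₀ (by positivity)]
    have hne : ((n:ℝ)) ^ n = (n:ℝ) ^ (n - m) * (n:ℝ) ^ m := by
      rw [← pow_add, Nat.sub_add_cancel hmn]
    push_cast
    calc ((Finset.univ.filter P).card : ℝ)
        ≤ (n.choose m : ℝ) * ((n.choose k : ℝ) * ((k:ℝ) ^ m * (n:ℝ) ^ (n - m))) := by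
          exact_mod_cast hcard
      _ = (n.choose m : ℝ) * (n.choose k) * ((k:ℝ) ^ m / (n:ℝ) ^ m) * ((n:ℝ)^(n-m) * (n:ℝ)^m) := by
          field_simp
      _ = (n.choose m : ℝ) * (n.choose k) * ((k:ℝ) ^ m / (n:ℝ) ^ m) * (n:ℝ) ^ n := by
          rw [← hne]
  refine hstep1.trans ?_
  -- three bounds
  have hA : (n.choose m : ℝ) ≤ 2 ^ ((n:ℝ) * binEnt τ) := choose_le_rpow n m τ hτ0 hτ hmτ
  have hB : (n.choose k : ℝ) ≤ 2 ^ ((n:ℝ) * binEnt δ) := choose_le_rpow n k δ hδ0.le hδ hkδ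
  have hC : (k:ℝ) ^ m / (n:ℝ) ^ m ≤ 2 ^ ((m:ℝ) * Real.logb 2 δ) := by
    have h1 : (k:ℝ) / n ≤ δ := (div_le_iff₀ hnpos).mpr (by linarith [hkδ])
    have h2 : (2:ℝ) ^ ((m:ℝ) * Real.logb 2 δ) = δ ^ m := by
      rw [mul_comm, Real.rpow_mul (by norm_num), Real.rpow_logb (by norm_num) (by norm_num) hδ0,
        Real.rpow_natCast]
    rw [h2, ← div_pow]
    exact pow_le_pow_left₀ (by positivity) h1 m
  have key : (n.choose m : ℝ) * (n.choose k) * ((k:ℝ) ^ m / (n:ℝ) ^ m)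
      ≤ 2 ^ ((n:ℝ) * binEnt τ) * 2 ^ ((n:ℝ) * binEnt δ) * 2 ^ ((m:ℝ) * Real.logb 2 δ) := by
    have h0 : (0:ℝ) ≤ (n.choose m : ℝ) := by positivity
    have h1 : (0:ℝ) ≤ (n.choose k : ℝ) := by positivity
    have h2 : (0:ℝ) ≤ (k:ℝ) ^ m / (n:ℝ) ^ m := by positivity
    exact mul_le_mul (mul_le_mul hA hB h1 (by positivity)) hC h2 (by positivity)
  refine key.trans_eq ?_
  rw [← Real.rpow_add (by norm_num), ← Real.rpow_add (by norm_num)]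
  congr 1
  ring
end

section
/- Let n ≥ 1, let α ∈ (0, 1], and let Inv : F_n × [n] → [n] be any function such that the probability over a uniformly random f ← F_n and uniformly random x ← [n] that Inv(f, f(x)) ∈ f^{−1}(f(x)) is at least α. Then the probability over uniformly random f ← F_n and x ← [n] that Inv(f, f(x)) = x is at least α²/8. -/
open Finset

lemma aux_pair (n : ℕ) (x x' : Fin n) (hne : x' ≠ x) :
    (univ.filter (fun f : Fin n → Fin n => f x' = f x)).card ≤ n ^ (n - 1) := by
  classical
  have : (univ.filter (fun f : Fin n → Fin n => f x' = f x)).card ≤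
      (univ : Finset ({z : Fin n // z ≠ x'} → Fin n)).card := by
    apply Finset.card_le_card_of_injOn (fun f => fun z => f z.1)
    · intro f _; exact mem_univ _
    · intro f hf g hg hfg
      simp only [mem_coe, mem_filter] at hf hg
      funext z
      by_cases hz : z = x'
      · subst hz
        have h1 : f x = g x := congrFun hfg ⟨x, hne.symm⟩
        rw [hf.2, hg.2, h1]
      · exact congrFun hfg ⟨z, hz⟩
  refine this.trans ?_
  rw [card_univ, Fintype.card_fun, Fintype.card_fin]
  have : Fintype.card {z : Fin n // z ≠ x'} = n - 1 := by
    rw [Fintype.card_subtype]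
    rw [Finset.filter_ne' univ x', Finset.card_erase_of_mem (mem_univ _), card_univ,
      Fintype.card_fin]
  rw [this]

lemma aux_total (n : ℕ) (hn : 1 ≤ n) :
    ∑ f : Fin n → Fin n, ∑ x : Fin n,
      (univ.filter (fun x' => f x' = f x ∧ x' ≠ x)).card ≤ n ^ (n + 1) := by
  classical
  have hrw : ∀ f : Fin n → Fin n, ∀ x : Fin n,
      (univ.filter (fun x' => f x' = f x ∧ x' ≠ x)).card
      = ∑ x' : Fin n, if f x' = f x ∧ x' ≠ x then 1 else 0 := by
    intro f x; rw [Finset.card_filter]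
  calc ∑ f : Fin n → Fin n, ∑ x : Fin n,
        (univ.filter (fun x' => f x' = f x ∧ x' ≠ x)).card
      = ∑ f : Fin n → Fin n, ∑ x : Fin n, ∑ x' : Fin n,
          if f x' = f x ∧ x' ≠ x then 1 else 0 := by
        simp_rw [hrw]
    _ = ∑ x : Fin n, ∑ x' : Fin n, ∑ f : Fin n → Fin n,
          if f x' = f x ∧ x' ≠ x then 1 else 0 := by
        rw [Finset.sum_comm]
        congr 1; funext x
        rw [Finset.sum_comm]
    _ ≤ ∑ _x : Fin n, ∑ _x' : Fin n, n ^ (n - 1) := by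
        apply Finset.sum_le_sum; intro x _
        apply Finset.sum_le_sum; intro x' _
        by_cases hne : x' = x
        · simp [hne]
        · have : ∑ f : Fin n → Fin n, (if f x' = f x ∧ x' ≠ x then 1 else 0)
              = (univ.filter (fun f : Fin n → Fin n => f x' = f x)).card := by
            rw [Finset.card_filter]
            apply Finset.sum_congr rfl
            intro f _
            simp [hne]
          rw [this]
          exact aux_pair n x x' hne
    _ = n * (n * n ^ (n - 1)) := by simp [mul_assoc]
    _ = n ^ (n + 1) := by
        rw [← pow_succ', ← pow_succ']
        congr 1
        omega

/-- Let `n ≥ 1`, `α ∈ (0,1]`, and `Inv : F_n × [n] → [n]` be such that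
over uniformly random `f ← F_n` and `x ← [n]`, `Inv(f, f(x)) ∈ f⁻¹(f(x))` with probability
at least `α`. Then `Inv(f, f(x)) = x` with probability at least `α²/8`. -/
theorem stmt_5 (n : ℕ) (hn : 1 ≤ n) (α : ℝ) (hα0 : 0 < α) (hα1 : α ≤ 1)
    (Inv : (Fin n → Fin n) → Fin n → Fin n)
    (h : α ≤ (Nat.card {p : (Fin n → Fin n) × Fin n //
          p.1 (Inv p.1 (p.1 p.2)) = p.1 p.2} : ℝ)
        / (Nat.card ((Fin n → Fin n) × Fin n))) :
    α ^ 2 / 8 ≤ (Nat.card {p : (Fin n → Fin n) × Fin n //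
          Inv p.1 (p.1 p.2) = p.2} : ℝ)
        / (Nat.card ((Fin n → Fin n) × Fin n)) := by
  classical
  set P := (Fin n → Fin n) × Fin n
  -- counts
  set A : ℕ := (univ.filter (fun p : P => p.1 (Inv p.1 (p.1 p.2)) = p.1 p.2)).card with hAdef
  set B : ℕ := (univ.filter (fun p : P => Inv p.1 (p.1 p.2) = p.2)).card with hBdef
  have hNcard : Nat.card P = n ^ (n + 1) := by
    rw [Nat.card_eq_fintype_card, Fintype.card_prod, Fintype.card_fun, Fintype.card_fin,
      pow_succ]
  have hAcard : Nat.card {p : P // p.1 (Inv p.1 (p.1 p.2)) = p.1 p.2} = A := by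
    rw [Nat.card_eq_fintype_card, Fintype.card_subtype]
  have hBcard : Nat.card {p : P // Inv p.1 (p.1 p.2) = p.2} = B := by
    rw [Nat.card_eq_fintype_card, Fintype.card_subtype]
  rw [hBcard, hNcard]
  rw [hAcard, hNcard] at h
  set Nn : ℕ := n ^ (n + 1) with hNndef
  have hNpos : (0 : ℝ) < Nn := by
    have : 0 < Nn := by positivity
    exact_mod_cast this
  -- degree functions
  set d : P → ℕ := fun p => (univ.filter (fun x' => p.1 x' = p.1 p.2)).card with hddef
  set e : P → ℕ := fun p => (univ.filter (fun x' => p.1 x' = p.1 p.2 ∧ x' ≠ p.2)).card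
    with hedef
  have hde : ∀ p : P, d p = e p + 1 := by
    intro p
    have hsplit : (univ.filter (fun x' => p.1 x' = p.1 p.2))
        = insert p.2 (univ.filter (fun x' => p.1 x' = p.1 p.2 ∧ x' ≠ p.2)) := by
      ext x'
      simp only [mem_filter, mem_univ, true_and, mem_insert]
      by_cases hx : x' = p.2
      · simp [hx]
      · simp [hx]
    have hnotmem : p.2 ∉ (univ.filter (fun x' => p.1 x' = p.1 p.2 ∧ x' ≠ p.2)) := by
      simp
    rw [hddef]
    simp only
    rw [hsplit, Finset.card_insert_of_notMem hnotmem, hedef]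
  -- threshold
  set T : ℕ := ⌈2 / α⌉₊ with hTdef
  have hT2 : 2 / α ≤ (T : ℝ) := Nat.le_ceil _
  have hT3 : (T : ℝ) ≤ 3 / α := by
    have h1 : (T : ℝ) < 2 / α + 1 := Nat.ceil_lt_add_one (by positivity)
    have h2 : (1 : ℝ) ≤ 1 / α := by
      rw [le_div_iff₀ hα0]; linarith
    have : 2 / α + 1 ≤ 3 / α := by
      have : (3 : ℝ) / α = 2 / α + 1 / α := by ring
      linarith
    linarith
  -- heavy set
  set H : Finset P := univ.filter (fun p => T < d p) with hHdef
  set C : ℕ := H.card with hCdef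
  -- Markov: C * T ≤ Nn
  have hMarkov : C * T ≤ Nn := by
    have h1 : C * T ≤ ∑ p ∈ H, e p := by
      have := Finset.card_nsmul_le_sum H e T (by
        intro p hp
        rw [hHdef] at hp
        simp only [mem_filter, mem_univ, true_and] at hp
        have := hde p
        omega)
      simpa [smul_eq_mul, mul_comm] using this
    have h2 : ∑ p ∈ H, e p ≤ ∑ p : P, e p :=
      Finset.sum_le_sum_of_subset (Finset.subset_univ H)
    have h3 : ∑ p : P, e p ≤ Nn := by
      rw [hedef]
      simp only
      rw [Fintype.sum_prod_type]
      exact aux_total n hn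
    omega
  -- splitting: A ≤ T * B + C
  have hsplitA : A ≤ T * B + C := by
    have hsub : (univ.filter (fun p : P => p.1 (Inv p.1 (p.1 p.2)) = p.1 p.2))
        ⊆ (univ.filter (fun p : P => p.1 (Inv p.1 (p.1 p.2)) = p.1 p.2 ∧ d p ≤ T)) ∪ H := by
      intro p hp
      simp only [mem_filter, mem_univ, true_and] at hp
      simp only [mem_union, mem_filter, mem_univ, true_and, hHdef]
      by_cases hdp : d p ≤ T
      · exact Or.inl ⟨hp, hdp⟩
      · exact Or.inr (by omega)
    have hG : (univ.filter (fun p : P => p.1 (Inv p.1 (p.1 p.2)) = p.1 p.2 ∧ d p ≤ T)).card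
        ≤ T * B := by
      apply Finset.card_le_mul_card_image_of_maps_to
        (f := fun p : P => (p.1, Inv p.1 (p.1 p.2)))
      · intro p hp
        simp only [mem_filter, mem_univ, true_and] at hp ⊢
        show Inv p.1 (p.1 (Inv p.1 (p.1 p.2))) = Inv p.1 (p.1 p.2)
        rw [hp.1]
      · intro b hb
        rcases Finset.eq_empty_or_nonempty
          ((univ.filter (fun p : P => p.1 (Inv p.1 (p.1 p.2)) = p.1 p.2 ∧ d p ≤ T)).filter
            (fun p => (p.1, Inv p.1 (p.1 p.2)) = b)) with hemp | ⟨q, hq⟩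
        · rw [hemp]; simp
        · simp only [mem_filter, mem_univ, true_and] at hq
          obtain ⟨⟨hqgood, hqd⟩, hqb⟩ := hq
          have hb1 : b.1 = q.1 := by rw [← hqb]
          have hb2 : b.2 = Inv q.1 (q.1 q.2) := by rw [← hqb]
          have hqb2 : q.1 b.2 = q.1 q.2 := by rw [hb2]; exact hqgood
          -- inject fiber into {x : q.1 x = q.1 q.2}
          have hinj : ((univ.filter (fun p : P => p.1 (Inv p.1 (p.1 p.2)) = p.1 p.2 ∧ d p ≤ T)).filter
              (fun p => (p.1, Inv p.1 (p.1 p.2)) = b)).card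
              ≤ (univ.filter (fun x => q.1 x = q.1 q.2)).card := by
            apply Finset.card_le_card_of_injOn (fun p => p.2)
            · intro p hp
              simp only [mem_coe, mem_filter, mem_univ, true_and] at hp
              obtain ⟨⟨hpgood, _⟩, hpb⟩ := hp
              have hp1 : p.1 = b.1 := by rw [← hpb]
              have hp2 : Inv p.1 (p.1 p.2) = b.2 := by rw [← hpb]
              simp only [mem_coe, mem_filter, mem_univ, true_and]
              -- q.1 p.2 = q.1 q.2
              have : p.1 b.2 = p.1 p.2 := by rw [← hp2]; exact hpgood
              rw [hp1, hb1] at this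
              rw [← this, ← hqb2]
            · intro p hp p' hp' hpp
              simp only [mem_coe, mem_filter, mem_univ, true_and] at hp hp'
              have hp1 : p.1 = b.1 := by rw [← hp.2]
              have hp'1 : p'.1 = b.1 := by rw [← hp'.2]
              exact Prod.ext (hp1.trans hp'1.symm) hpp
          refine hinj.trans ?_
          exact hqd
    calc A ≤ ((univ.filter (fun p : P => p.1 (Inv p.1 (p.1 p.2)) = p.1 p.2 ∧ d p ≤ T)) ∪ H).card :=
          Finset.card_le_card hsub
      _ ≤ (univ.filter (fun p : P => p.1 (Inv p.1 (p.1 p.2)) = p.1 p.2 ∧ d p ≤ T)).card + C :=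
          Finset.card_union_le _ _
      _ ≤ T * B + C := by omega
  -- real arithmetic
  have hA' : α * Nn ≤ (A : ℝ) := by
    rw [le_div_iff₀ hNpos] at h
    linarith [h]
  have hsplitA' : (A : ℝ) ≤ T * B + C := by exact_mod_cast hsplitA
  have hMarkov' : (C : ℝ) * T ≤ Nn := by exact_mod_cast hMarkov
  have hC' : (C : ℝ) ≤ Nn * (α / 2) := by
    have h1 : (C : ℝ) * (2 / α) ≤ (C : ℝ) * T :=
      mul_le_mul_of_nonneg_left hT2 (Nat.cast_nonneg C)
    have h2 : (C : ℝ) * (2 / α) ≤ Nn := h1.trans hMarkov'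
    have h3 : (C : ℝ) * (2 / α) * (α / 2) ≤ Nn * (α / 2) :=
      mul_le_mul_of_nonneg_right h2 (by positivity)
    calc (C : ℝ) = (C : ℝ) * (2 / α) * (α / 2) := by field_simp
      _ ≤ Nn * (α / 2) := h3
  have hTB : α * Nn / 2 ≤ (3 / α) * B := by
    have h4 : α * Nn / 2 ≤ (T : ℝ) * B := by linarith
    have h5 : (T : ℝ) * B ≤ (3 / α) * B :=
      mul_le_mul_of_nonneg_right hT3 (Nat.cast_nonneg B)
    linarith
  have hB2 : α ^ 2 * Nn / 6 ≤ (B : ℝ) := by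
    have h6 : (α / 3) * (α * Nn / 2) ≤ (α / 3) * ((3 / α) * B) :=
      mul_le_mul_of_nonneg_left hTB (by positivity)
    calc α ^ 2 * Nn / 6 = (α / 3) * (α * Nn / 2) := by ring
      _ ≤ (α / 3) * ((3 / α) * B) := h6
      _ = B := by field_simp
  rw [le_div_iff₀ hNpos]
  nlinarith [hB2, hNpos.le, sq_nonneg α, mul_nonneg (sq_nonneg α) hNpos.le]
end

section
/- Let 𝔽 be a finite field with exactly n elements, identified with [n]. Let ℓ, t ∈ ℕ with t ≥ 1, let A ∈ 𝔽^{ℓ×n}, let v ∈ 𝔽^ℓ lie in the image of the map w ↦ A·w, and let B^1, …, B^n ∈ 𝔽^{t×n}. For y ∈ [n] let A^y := stack(A, B^y), the matrix whose rows are the rows of A followed by the rows of B^y. Let F be uniformly distributed over 𝔽^n and let Y be uniformly distributed over [n], independent of F. Then for every μ ∈ (0, 1/2]: Pr[Y ∈ F(E(A^Y)) | A·F = v] ≤ ℓ/n + μ + 2^{2⌈μn⌉·log₂(1/μ) + ⌈μn⌉·log₂(t/n) + ℓ·log₂ n}, where F(E(A^Y)) := {F_j : j ∈ E(A^Y)}.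 -/
open Finset Matrix


private lemma mem_span_rows_of_ker {𝔽 : Type} [Field 𝔽] {ℓ n : ℕ}
    (A : Matrix (Fin ℓ) (Fin n) 𝔽) (j : Fin n)
    (h : ∀ u : Fin n → 𝔽, A.mulVec u = 0 → u j = 0) :
    (Pi.single j (1:𝔽) : Fin n → 𝔽) ∈ Submodule.span 𝔽 (Set.range fun r : Fin ℓ => A r) := by
  classical
  set f := A.mulVecLin with hf
  have hker : LinearMap.ker f ≤ LinearMap.ker (LinearMap.proj j :
      (Fin n → 𝔽) →ₗ[𝔽] 𝔽) := by
    intro u hu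
    exact h u (by simpa [f] using hu)
  set φ : LinearMap.range f →ₗ[𝔽] 𝔽 :=
    ((LinearMap.ker f).liftQ (LinearMap.proj j) hker).comp
      f.quotKerEquivRange.symm.toLinearMap with hφ
  obtain ⟨g, hg⟩ := LinearMap.exists_extend φ
  have key : ∀ x : Fin n → 𝔽, g (A.mulVec x) = x j := by
    intro x
    have h1 : g (A.mulVec x) = φ ⟨f x, LinearMap.mem_range_self f x⟩ := by
      have := congrArg (fun m => m ⟨f x, LinearMap.mem_range_self f x⟩) hg
      simpa [f] using this
    rw [h1, hφ]
    simp only [LinearMap.comp_apply, LinearEquiv.coe_toLinearMap]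
    rw [LinearMap.quotKerEquivRange_symm_apply_image]
    simp
  have : (fun r : Fin ℓ => g (Pi.single r 1)) ᵥ* A = Pi.single j (1:𝔽) := by
    funext k
    have h2 := key (Pi.single k (1:𝔽))
    rw [Matrix.mulVec_single_one] at h2
    have h3 : (Aᵀ k : Fin ℓ → 𝔽) = ∑ r, Pi.single r ((Aᵀ k) r) :=
      (Finset.univ_sum_single _).symm
    have h4 : g (Aᵀ k) = ∑ r, A r k * g (Pi.single r 1) := by
      rw [h3, map_sum]
      congr 1
      funext r
      have : (Pi.single r ((Aᵀ k) r) : Fin ℓ → 𝔽)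
          = (Aᵀ k) r • (Pi.single r (1:𝔽) : Fin ℓ → 𝔽) := by
        funext s
        by_cases hs : s = r <;> simp [Pi.single_apply, hs]
      rw [this, g.map_smul, smul_eq_mul, Matrix.transpose_apply]
    rw [show A.col k = Aᵀ k from rfl, h4] at h2
    simp only [Matrix.vecMul, dotProduct]
    calc ∑ x, g (Pi.single x 1) * A x k = ∑ r, A r k * g (Pi.single r 1) :=
          Finset.sum_congr rfl fun r _ => mul_comm _ _
      _ = (Pi.single k (1:𝔽) : Fin n → 𝔽) j := h2
      _ = (Pi.single j (1:𝔽) : Fin n → 𝔽) k := by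
            rcases eq_or_ne k j with h | h
            · subst h; rfl
            · simp [Pi.single_apply, h, h.symm]
  rw [← this]
  rw [show (Set.range fun r : Fin ℓ => A r) = Set.range A.row from rfl, ← range_vecMulLinear]
  exact ⟨_, rfl⟩

private lemma exists_kernel_vec {𝔽 : Type} [Field 𝔽] {ℓ n : ℕ}
    (A : Matrix (Fin ℓ) (Fin n) 𝔽) (j : Fin n)
    (h : (Pi.single j (1:𝔽) : Fin n → 𝔽) ∉
      Submodule.span 𝔽 (Set.range fun r : Fin ℓ => A r)) :
    ∃ u : Fin n → 𝔽, A.mulVec u = 0 ∧ u j = 1 := by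
  by_contra hc
  push_neg at hc
  refine h (mem_span_rows_of_ker A j fun u hu => ?_)
  by_contra h0
  refine hc ((u j)⁻¹ • u) ?_ ?_
  · rw [Matrix.mulVec_smul, hu, smul_zero]
  · simp [inv_mul_cancel₀ h0]

private lemma card_single_le {𝔽 : Type} [Field 𝔽] {n : ℕ} {ι : Type} [Fintype ι]
    (w : ι → (Fin n → 𝔽)) (p : Finset (Fin n))
    (hp : ∀ j ∈ p, (Pi.single j (1:𝔽) : Fin n → 𝔽) ∈ Submodule.span 𝔽 (Set.range w)) :
    p.card ≤ Fintype.card ι := by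
  classical
  set W := Submodule.span 𝔽 (Set.range w) with hW
  have hfd : FiniteDimensional 𝔽 W :=
    FiniteDimensional.span_of_finite _ (Set.finite_range w)
  have hli : LinearIndependent 𝔽
      (fun j : p => (⟨Pi.single (j : Fin n) 1, hp j j.2⟩ : W)) := by
    apply LinearIndependent.of_comp W.subtype
    have hb := (Pi.basisFun 𝔽 (Fin n)).linearIndependent
    have := hb.comp (fun j : p => (j : Fin n)) Subtype.coe_injective
    convert this using 1
    funext j
    simp [Pi.basisFun_apply]
  have h1 : Fintype.card p ≤ Module.finrank 𝔽 W := hli.fintype_card_le_finrank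
  have h2 : Module.finrank 𝔽 W ≤ Fintype.card ι := by
    have := finrank_range_le_card (R := 𝔽) w
    simpa [Set.finrank, hW] using this
  calc p.card = Fintype.card p := (Fintype.card_coe p).symm
    _ ≤ _ := le_trans h1 h2

private lemma fiber_count {𝔽 : Type} [Field 𝔽] [Fintype 𝔽] [DecidableEq 𝔽] {ℓ n : ℕ}
    (A : Matrix (Fin ℓ) (Fin n) 𝔽) (v : Fin ℓ → 𝔽) {j : Fin n}
    {u : Fin n → 𝔽} (hu : A.mulVec u = 0) (huj : u j = 1) (y : 𝔽) :
    (Finset.univ.filter fun f : Fin n → 𝔽 => A.mulVec f = v).card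
      = Fintype.card 𝔽 *
        (Finset.univ.filter fun f : Fin n → 𝔽 => A.mulVec f = v ∧ f j = y).card := by
  classical
  have hsplit : (Finset.univ.filter fun f : Fin n → 𝔽 => A.mulVec f = v).card
      = ∑ z : 𝔽, (Finset.univ.filter fun f : Fin n → 𝔽 => A.mulVec f = v ∧ f j = z).card := by
    rw [Finset.card_eq_sum_card_fiberwise
      (f := fun f : Fin n → 𝔽 => f j) (t := Finset.univ) (fun x _ => Finset.mem_univ _)]
    congr 1
    funext z
    rw [Finset.filter_filter]
  have hfib : ∀ z : 𝔽,
      (Finset.univ.filter fun f : Fin n → 𝔽 => A.mulVec f = v ∧ f j = z).card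
      = (Finset.univ.filter fun f : Fin n → 𝔽 => A.mulVec f = v ∧ f j = y).card := by
    intro z
    apply Finset.card_bij' (fun f _ => f + (y - z) • u) (fun f _ => f + (z - y) • u)
    · intro f hf
      simp only [Finset.mem_filter, Finset.mem_univ, true_and] at hf ⊢
      constructor
      · rw [Matrix.mulVec_add, Matrix.mulVec_smul, hu, smul_zero, add_zero, hf.1]
      · simp [huj, hf.2]
    · intro f hf
      simp only [Finset.mem_filter, Finset.mem_univ, true_and] at hf ⊢
      constructor
      · rw [Matrix.mulVec_add, Matrix.mulVec_smul, hu, smul_zero, add_zero, hf.1]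
      · simp [huj, hf.2]
    · intro f _; funext k; simp; ring
    · intro f _; funext k; simp; ring
  rw [hsplit]
  rw [Finset.sum_congr rfl fun z _ => hfib z, Finset.sum_const, Finset.card_univ,
    smul_eq_mul]



private lemma final_ineq (n t ℓ : ℕ) (hn : 1 ≤ n) (ht : 1 ≤ t)
    (μ : ℝ) (hμ0 : 0 < μ) (hμ : μ ≤ 1 / 2) :
    (t : ℝ) / n ≤ μ + (2 : ℝ) ^ (2 * (⌈μ * n⌉₊ : ℝ) * Real.logb 2 (1 / μ)
        + (⌈μ * n⌉₊ : ℝ) * Real.logb 2 (t / n) + (ℓ : ℝ) * Real.logb 2 n) := by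
  have hn0 : (0:ℝ) < n := by exact_mod_cast hn
  have ht0 : (0:ℝ) < t := by exact_mod_cast ht
  have hc0 : (0:ℝ) < (t:ℝ)/n := div_pos ht0 hn0
  have hμ1 : (0:ℝ) < 1/μ := by positivity
  set m : ℝ := (⌈μ * n⌉₊ : ℝ) with hm
  have hm1 : (1:ℝ) ≤ m := by
    rw [hm]
    have h1 : 1 ≤ ⌈μ * n⌉₊ := Nat.one_le_ceil_iff.2 (by positivity)
    exact_mod_cast h1
  have h2 : (2:ℝ) ^ (2 * m * Real.logb 2 (1 / μ) + m * Real.logb 2 ((t:ℝ) / n)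
        + (ℓ : ℝ) * Real.logb 2 n)
      = ((1/μ) ^ (2*m : ℝ)) * (((t:ℝ)/n) ^ (m : ℝ)) * ((n:ℝ) ^ (ℓ:ℝ)) := by
    rw [Real.rpow_add two_pos, Real.rpow_add two_pos]
    congr 1
    · congr 1
      · rw [mul_comm (2*m), Real.rpow_mul (by norm_num : (0:ℝ) ≤ 2),
          Real.rpow_logb two_pos (by norm_num) hμ1]
      · rw [mul_comm m, Real.rpow_mul (by norm_num : (0:ℝ) ≤ 2),
          Real.rpow_logb two_pos (by norm_num) hc0]
    · rw [mul_comm (ℓ:ℝ), Real.rpow_mul (by norm_num : (0:ℝ) ≤ 2),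
        Real.rpow_logb two_pos (by norm_num) hn0]
  rw [h2]
  rcases le_or_gt ((t:ℝ)/n) μ with h | h
  · have : (0:ℝ) ≤ ((1/μ) ^ (2*m : ℝ)) * (((t:ℝ)/n) ^ (m : ℝ)) * ((n:ℝ) ^ (ℓ:ℝ)) := by
      positivity
    linarith
  · have hsq : (1/μ) ^ (2:ℝ) = (1/μ) * (1/μ) := by
      rw [show (2:ℝ) = ((2:ℕ):ℝ) by norm_num, Real.rpow_natCast]; ring
    set c := (t:ℝ)/n with hcdef
    set b := (1/μ)^(2:ℝ) * c with hbdef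
    have hb : (1/μ) ^ (2*m : ℝ) * c ^ (m : ℝ) = b ^ (m:ℝ) := by
      rw [hbdef, Real.mul_rpow (by positivity) (le_of_lt hc0),
        ← Real.rpow_mul (le_of_lt hμ1)]
    have hiμ : (2:ℝ) ≤ 1/μ := by rw [le_div_iff₀ hμ0]; linarith
    have hinv : (1/μ) * μ = 1 := by field_simp
    have hcb : c ≤ b := by
      rw [hbdef, hsq]
      nlinarith [mul_le_mul_of_nonneg_right
        (show (1:ℝ) ≤ (1/μ)*(1/μ) by nlinarith [hiμ]) (le_of_lt hc0)]
    have hb1 : (1:ℝ) ≤ b := by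
      rw [hbdef, hsq]
      have hy : (1/μ) * (1/μ) * μ = 1/μ := by
        rw [mul_assoc]
        rw [show (1/μ) * μ = 1 from hinv, mul_one]
      nlinarith [mul_lt_mul_of_pos_left h (mul_pos hμ1 hμ1), hy, hiμ]
    have h1 : b ≤ b ^ (m:ℝ) := by
      nth_rewrite 1 [← Real.rpow_one b]
      exact Real.rpow_le_rpow_of_exponent_le hb1 hm1
    have hnl : (1:ℝ) ≤ (n:ℝ) ^ (ℓ:ℝ) := by
      rw [show (1:ℝ) = (n:ℝ) ^ (0:ℝ) by rw [Real.rpow_zero]]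
      exact Real.rpow_le_rpow_of_exponent_le (by exact_mod_cast hn) (by positivity)
    have hfin : c ≤ (1/μ) ^ (2*m : ℝ) * c ^ (m : ℝ) * ((n:ℝ)^(ℓ:ℝ)) := by
      calc c ≤ b := hcb
        _ ≤ b ^ (m:ℝ) := h1
        _ ≤ b ^ (m:ℝ) * (n:ℝ)^(ℓ:ℝ) := le_mul_of_one_le_right (by positivity) hnl
        _ = _ := by rw [← hb]
    linarith


/-- Let `𝔽` be a finite field with exactly `n` elements (identified with
`[n]`), `A ∈ 𝔽^{ℓ×n}`, `v` in the image of `w ↦ A ⬝ w`, and `B^y ∈ 𝔽^{t×n}` for each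
`y ∈ 𝔽`. With `F` uniform over `𝔽^n` and `Y` uniform over `𝔽` independent of `F`, for
every `μ ∈ (0,1/2]` the probability, conditioned on `A ⬝ F = v`, that
`Y ∈ F(E(stack(A, B^Y)))` is at most
`ℓ/n + μ + 2 ^ (2⌈μn⌉ log₂(1/μ) + ⌈μn⌉ log₂(t/n) + ℓ log₂ n)`,
where `E(M)` is the set of indices `j` with `e_j` in the row span of `M`. -/
theorem stmt_6 {𝔽 : Type} [Field 𝔽] [Fintype 𝔽] (n ℓ t : ℕ)
    (hn : Fintype.card 𝔽 = n) (ht : 1 ≤ t)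
    (A : Matrix (Fin ℓ) (Fin n) 𝔽) (v : Fin ℓ → 𝔽)
    (hv : ∃ w : Fin n → 𝔽, A.mulVec w = v)
    (B : 𝔽 → Matrix (Fin t) (Fin n) 𝔽)
    (μ : ℝ) (hμ0 : 0 < μ) (hμ : μ ≤ 1 / 2) :
    (Nat.card {fy : (Fin n → 𝔽) × 𝔽 // A.mulVec fy.1 = v ∧
        ∃ j : Fin n,
          (Pi.single j (1 : 𝔽) : Fin n → 𝔽) ∈
            Submodule.span 𝔽
              ((Set.range fun r : Fin ℓ => A r) ∪
                (Set.range fun r : Fin t => (B fy.2) r)) ∧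
          fy.1 j = fy.2} : ℝ)
      / (Nat.card {fy : (Fin n → 𝔽) × 𝔽 // A.mulVec fy.1 = v}) ≤
    (ℓ : ℝ) / n + μ + (2 : ℝ) ^ (2 * (⌈μ * n⌉₊ : ℝ) * Real.logb 2 (1 / μ)
        + (⌈μ * n⌉₊ : ℝ) * Real.logb 2 (t / n) + (ℓ : ℝ) * Real.logb 2 n) := by
  classical
  have hn1 : 1 ≤ n := hn ▸ Fintype.card_pos
  set D := (univ.filter fun f : Fin n → 𝔽 => A.mulVec f = v).card with hDdef
  obtain ⟨w₀, hw₀⟩ := hv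
  have hD1 : 1 ≤ D := by
    rw [hDdef]
    exact Finset.card_pos.2 ⟨w₀, by simp [hw₀]⟩
  set EA := (univ.filter fun j : Fin n =>
      (Pi.single j (1:𝔽) : Fin n → 𝔽) ∈
        Submodule.span 𝔽 (Set.range fun r : Fin ℓ => A r)) with hEA
  set S : 𝔽 → Finset (Fin n) := fun y => univ.filter fun j : Fin n =>
      (Pi.single j (1:𝔽) : Fin n → 𝔽) ∈ Submodule.span 𝔽
        ((Set.range fun r : Fin ℓ => A r) ∪
          (Set.range fun r : Fin t => (B y) r)) with hS
  have hEAS : ∀ y, EA ⊆ S y := by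
    intro y j hj
    simp only [hEA, hS, Finset.mem_filter, Finset.mem_univ, true_and] at hj ⊢
    exact Submodule.span_mono Set.subset_union_left hj
  have hEAcard : EA.card ≤ ℓ := by
    have h := card_single_le (fun r : Fin ℓ => A r) EA
      (fun j hj => by simpa [hEA] using hj)
    simpa using h
  have hScard : ∀ y, (S y).card ≤ ℓ + t := by
    intro y
    have h := card_single_le
      (Sum.elim (fun r : Fin ℓ => A r) (fun r : Fin t => (B y) r)) (S y) ?_
    · simpa using h
    · intro j hj
      simp only [hS, Finset.mem_filter, Finset.mem_univ, true_and] at hj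
      rwa [Set.Sum.elim_range]
  set c : Fin n → 𝔽 → ℕ := fun j y =>
    (univ.filter fun f : Fin n → 𝔽 => A.mulVec f = v ∧ f j = y).card with hc
  have hpart : ∀ j : Fin n, ∑ y : 𝔽, c j y = D := by
    intro j
    rw [hDdef, Finset.card_eq_sum_card_fiberwise
      (f := fun f : Fin n → 𝔽 => f j) (t := univ) (fun x _ => mem_univ _)]
    exact Finset.sum_congr rfl fun y _ => by rw [hc]; simp [Finset.filter_filter]
  -- numerator
  set P : (Fin n → 𝔽) × 𝔽 → Prop := fun fy => A.mulVec fy.1 = v ∧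
        ∃ j : Fin n,
          (Pi.single j (1 : 𝔽) : Fin n → 𝔽) ∈
            Submodule.span 𝔽
              ((Set.range fun r : Fin ℓ => A r) ∪
                (Set.range fun r : Fin t => (B fy.2) r)) ∧
          fy.1 j = fy.2 with hP
  set N := (univ.filter P).card with hN
  have hnumcard : Nat.card {fy : (Fin n → 𝔽) × 𝔽 // P fy} = N := by
    rw [Nat.card_eq_fintype_card, Fintype.card_subtype, hN]
  have step1 : N ≤ ∑ y : 𝔽, (univ.filter fun f : Fin n → 𝔽 =>
      A.mulVec f = v ∧ ∃ j ∈ S y, f j = y).card := by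
    rw [hN]
    have hsub : univ.filter P ⊆ univ.biUnion (fun y : 𝔽 =>
        (univ.filter fun f : Fin n → 𝔽 =>
          A.mulVec f = v ∧ ∃ j ∈ S y, f j = y).image (fun f => (f, y))) := by
      intro fy hfy
      simp only [hP, Finset.mem_filter, Finset.mem_univ, true_and] at hfy
      refine Finset.mem_biUnion.2 ⟨fy.2, mem_univ _, Finset.mem_image.2 ⟨fy.1, ?_, rfl⟩⟩
      simp only [Finset.mem_filter, Finset.mem_univ, true_and, hS]
      refine ⟨hfy.1, ?_⟩
      obtain ⟨j, hj1, hj2⟩ := hfy.2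
      exact ⟨j, by simpa using hj1, hj2⟩
    calc (univ.filter P).card
        ≤ (univ.biUnion fun y : 𝔽 => (univ.filter fun f : Fin n → 𝔽 =>
            A.mulVec f = v ∧ ∃ j ∈ S y, f j = y).image (fun f => (f, y))).card :=
          Finset.card_le_card hsub
      _ ≤ ∑ y : 𝔽, ((univ.filter fun f : Fin n → 𝔽 =>
            A.mulVec f = v ∧ ∃ j ∈ S y, f j = y).image (fun f => (f, y))).card :=
          Finset.card_biUnion_le
      _ ≤ _ := Finset.sum_le_sum fun y _ => Finset.card_image_le
  have step2 : ∀ y : 𝔽, (univ.filter fun f : Fin n → 𝔽 =>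
      A.mulVec f = v ∧ ∃ j ∈ S y, f j = y).card ≤ ∑ j ∈ S y, c j y := by
    intro y
    have hsub : (univ.filter fun f : Fin n → 𝔽 => A.mulVec f = v ∧ ∃ j ∈ S y, f j = y)
        ⊆ (S y).biUnion (fun j => univ.filter fun f : Fin n → 𝔽 =>
            A.mulVec f = v ∧ f j = y) := by
      intro f hf
      simp only [Finset.mem_filter, Finset.mem_univ, true_and] at hf
      obtain ⟨j, hj1, hj2⟩ := hf.2
      exact Finset.mem_biUnion.2 ⟨j, hj1, by simp [hf.1, hj2]⟩
    exact le_trans (Finset.card_le_card hsub) Finset.card_biUnion_le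
  -- key nat bound
  have keybound : n * N ≤ n * ((ℓ + t) * D) := by
    have hsplit : ∀ y : 𝔽, ∑ j ∈ S y, c j y
        = ∑ j ∈ S y \ EA, c j y + ∑ j ∈ EA, c j y :=
      fun y => (Finset.sum_sdiff (hEAS y)).symm
    have hDval : ∀ y : 𝔽, ∀ j ∈ S y \ EA, n * c j y = D := by
      intro y j hj
      have hjE : (Pi.single j (1:𝔽) : Fin n → 𝔽) ∉
          Submodule.span 𝔽 (Set.range fun r : Fin ℓ => A r) := by
        have := (Finset.mem_sdiff.1 hj).2
        simpa [hEA] using this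
      obtain ⟨u, hu, huj⟩ := exists_kernel_vec A j hjE
      have := fiber_count A v hu huj y
      rw [hn] at this
      rw [hc, hDdef, this]
    have hb1 : ∀ y : 𝔽, n * (∑ j ∈ S y \ EA, c j y) ≤ (ℓ + t - EA.card) * D := by
      intro y
      rw [Finset.mul_sum]
      calc ∑ j ∈ S y \ EA, n * c j y = ∑ j ∈ S y \ EA, D :=
            Finset.sum_congr rfl (hDval y)
        _ = (S y \ EA).card * D := by rw [Finset.sum_const, smul_eq_mul]
        _ ≤ (ℓ + t - EA.card) * D := by
            apply Nat.mul_le_mul_right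
            rw [Finset.card_sdiff_of_subset (hEAS y)]
            exact Nat.sub_le_sub_right (hScard y) _
    have hb2 : ∑ y : 𝔽, ∑ j ∈ EA, c j y = EA.card * D := by
      rw [Finset.sum_comm]
      rw [Finset.sum_congr rfl fun j _ => hpart j, Finset.sum_const, smul_eq_mul]
    calc n * N ≤ n * ∑ y : 𝔽, (∑ j ∈ S y \ EA, c j y + ∑ j ∈ EA, c j y) := by
          apply Nat.mul_le_mul_left
          refine le_trans step1 (Finset.sum_le_sum fun y _ => ?_)
          rw [← hsplit y]
          exact step2 y
      _ = ∑ y : 𝔽, n * (∑ j ∈ S y \ EA, c j y) + n * ∑ y : 𝔽, ∑ j ∈ EA, c j y := by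
          rw [Finset.sum_add_distrib, Nat.mul_add, Finset.mul_sum]
      _ ≤ ∑ y : 𝔽, (ℓ + t - EA.card) * D + n * (EA.card * D) := by
          rw [hb2]
          exact Nat.add_le_add_right (Finset.sum_le_sum fun y _ => hb1 y) _
      _ = n * ((ℓ + t - EA.card) * D) + n * (EA.card * D) := by
          rw [Finset.sum_const, smul_eq_mul, Finset.card_univ, hn]
      _ = n * ((ℓ + t - EA.card + EA.card) * D) := by rw [Nat.add_mul, Nat.mul_add]
      _ = n * ((ℓ + t) * D) := by
          rw [Nat.sub_add_cancel (le_trans hEAcard (Nat.le_add_right ℓ t))]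
  have hnpos : 0 < n := hn1
  have hNle : N ≤ (ℓ + t) * D := Nat.le_of_mul_le_mul_left keybound hnpos
  -- denominator
  have hden : Nat.card {fy : (Fin n → 𝔽) × 𝔽 // A.mulVec fy.1 = v} = D * n := by
    rw [Nat.card_eq_fintype_card, Fintype.card_subtype]
    have he : (univ.filter fun fy : (Fin n → 𝔽) × 𝔽 => A.mulVec fy.1 = v)
        = (univ.filter fun f : Fin n → 𝔽 => A.mulVec f = v) ×ˢ univ := by
      ext fy
      simp [Finset.mem_product]
    rw [he, Finset.card_product, Finset.card_univ, hn, hDdef]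
  -- put it together over ℝ
  have hprob : (Nat.card {fy : (Fin n → 𝔽) × 𝔽 // P fy} : ℝ)
      / (Nat.card {fy : (Fin n → 𝔽) × 𝔽 // A.mulVec fy.1 = v}) ≤ ((ℓ : ℝ) + t) / n := by
    rw [hnumcard, hden]
    have hDn : (0:ℝ) < (D:ℝ) * n := by
      have : (0:ℝ) < (D:ℝ) := by exact_mod_cast hD1
      have h2 : (0:ℝ) < (n:ℝ) := by exact_mod_cast hn1
      positivity
    rw [div_le_div_iff₀ (by push_cast; exact_mod_cast hDn) (by exact_mod_cast hn1)]
    have : (N:ℝ) ≤ ((ℓ:ℝ) + t) * D := by exact_mod_cast hNle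
    have hD0 : (0:ℝ) ≤ (D:ℝ) := by positivity
    have hn0 : (0:ℝ) ≤ (n:ℝ) := by positivity
    push_cast
    nlinarith
  refine le_trans hprob ?_
  rw [add_div]
  have := final_ineq n t ℓ hn1 ht μ hμ0 hμ
  linarith
end

section
/- Let 𝔽 be a finite field with exactly n elements, identified with [n], and let Inv be a zero-advice non-adaptive inverter with an affine decoder: for every y ∈ [n] there exist α^y ∈ 𝔽^n and β^y ∈ 𝔽 such that Inv(y; f) = ⟨α^y, f⟩ + β^y for all f ∈ F_n. Let F be uniform over F_n and Y = (Y_1, …, Y_n) uniform over [n]^n, independent of F; let X_j := Inv(Y_j; F) and let Z_i be the event that F(X_j) = Y_j for all j ∈ [i] (Z_0 is the sure event). Then for every i ∈ [n] and μ ∈ (0, 1/2]: Pr[Z_i] ≤ ((2i−1)/n + μ + 2^{2⌈μn⌉·log₂(1/μ) − ⌈μn⌉·log₂ n + (2i−2)·log₂ n}) · Pr[Z_{i−1}]. -/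
set_option synthInstance.maxHeartbeats 1000000
set_option maxHeartbeats 2000000
set_option linter.unusedSectionVars false

open Finset

open scoped Classical

namespace Stmt7Aux

variable {𝔽 : Type} [Field 𝔽] [Fintype 𝔽] [DecidableEq 𝔽]

lemma fib_card_eq {W : Type} [AddCommGroup W] [Module 𝔽 W] [DecidableEq W]
    (Ψ : (𝔽 → 𝔽) →ₗ[𝔽] W) (θ : (𝔽 → 𝔽) →ₗ[𝔽] 𝔽)
    (u : 𝔽 → 𝔽) (hu0 : Ψ u = 0) (huθ : θ u ≠ 0) (w : W) (c₁ c₂ : 𝔽) :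
    (univ.filter fun f : 𝔽 → 𝔽 => Ψ f = w ∧ θ f = c₁).card
      = (univ.filter fun f : 𝔽 → 𝔽 => Ψ f = w ∧ θ f = c₂).card := by
  apply Finset.card_bij' (i := fun f _ => f + ((c₂ - c₁)/(θ u)) • u)
    (j := fun g _ => g + ((c₁ - c₂)/(θ u)) • u)
  · intro f hf
    simp only [mem_filter, mem_univ, true_and] at hf ⊢
    constructor
    · simp [map_add, map_smul, hf.1, hu0]
    · simp [map_add, map_smul, hf.2, smul_eq_mul]
      field_simp
      ring
  · intro g hg
    simp only [mem_filter, mem_univ, true_and] at hg ⊢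
    constructor
    · simp [map_add, map_smul, hg.1, hu0]
    · simp [map_add, map_smul, hg.2, smul_eq_mul]
      field_simp
      ring
  · intro f hf
    simp only [add_assoc, ← add_smul]
    field_simp
    rw [show c₂ - c₁ + (c₁ - c₂) = 0 by ring]; simp
  · intro g hg
    simp only [add_assoc, ← add_smul]
    field_simp
    rw [show c₁ - c₂ + (c₂ - c₁) = 0 by ring]; simp

lemma fib_card_le {W : Type} [AddCommGroup W] [Module 𝔽 W] [DecidableEq W]
    (Ψ : (𝔽 → 𝔽) →ₗ[𝔽] W) (θ : (𝔽 → 𝔽) →ₗ[𝔽] 𝔽)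
    (hwit : ∃ u, Ψ u = 0 ∧ θ u ≠ 0) (w : W) (c : 𝔽) :
    Fintype.card 𝔽 * (univ.filter fun f : 𝔽 → 𝔽 => Ψ f = w ∧ θ f = c).card
      ≤ (univ.filter fun f : 𝔽 → 𝔽 => Ψ f = w).card := by
  obtain ⟨u, hu0, huθ⟩ := hwit
  have hsplit : (univ.filter fun f : 𝔽 → 𝔽 => Ψ f = w).card
      = ∑ c' : 𝔽, ((univ.filter fun f : 𝔽 → 𝔽 => Ψ f = w).filter fun f => θ f = c').card :=
    Finset.card_eq_sum_card_fiberwise (fun f _ => mem_univ (θ f))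
  have hff : ∀ c' : 𝔽, ((univ.filter fun f : 𝔽 → 𝔽 => Ψ f = w).filter fun f => θ f = c')
      = (univ.filter fun f : 𝔽 → 𝔽 => Ψ f = w ∧ θ f = c') := by
    intro c'; rw [Finset.filter_filter]
  rw [hsplit]
  refine le_of_eq ?_
  calc Fintype.card 𝔽 * (univ.filter fun f : 𝔽 → 𝔽 => Ψ f = w ∧ θ f = c).card
      = ∑ _c' : 𝔽, (univ.filter fun f : 𝔽 → 𝔽 => Ψ f = w ∧ θ f = c).card := by
        rw [Finset.sum_const, card_univ, smul_eq_mul]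
    _ = ∑ c' : 𝔽, (univ.filter fun f : 𝔽 → 𝔽 => Ψ f = w ∧ θ f = c').card := by
        exact Finset.sum_congr rfl (fun c' _ => fib_card_eq Ψ θ u hu0 huθ w c c')
    _ = ∑ c' : 𝔽, ((univ.filter fun f : 𝔽 → 𝔽 => Ψ f = w).filter fun f => θ f = c').card := by
        simp_rw [hff]

lemma fix_card_le (U : Submodule 𝔽 (𝔽 → 𝔽)) :
    (univ.filter fun x : 𝔽 => ∀ f ∈ U, f x = 0).card + Module.finrank 𝔽 U
      ≤ Fintype.card 𝔽 := by
  set Fx := univ.filter fun x : 𝔽 => ∀ f ∈ U, f x = 0 with hFx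
  set R : (𝔽 → 𝔽) →ₗ[𝔽] ({x : 𝔽 // x ∈ Fx} → 𝔽) :=
    LinearMap.pi (fun x => LinearMap.proj (x : 𝔽)) with hR
  have hUker : U ≤ LinearMap.ker R := by
    intro f hf
    simp only [LinearMap.mem_ker]
    funext x
    exact (Finset.mem_filter.mp x.2).2 f hf
  have hsurj : Function.Surjective R := by
    intro t
    refine ⟨fun z => if h : z ∈ Fx then t ⟨z, h⟩ else 0, ?_⟩
    funext x
    simp only [hR, LinearMap.pi_apply, LinearMap.proj_apply]
    rw [dif_pos x.2]
  have hrank := LinearMap.finrank_range_add_finrank_ker R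
  have hrange : Module.finrank 𝔽 (LinearMap.range R) = Fx.card := by
    rw [LinearMap.range_eq_top.mpr hsurj, finrank_top, Module.finrank_fintype_fun_eq_card]
    exact Fintype.card_coe Fx
  have hV : Module.finrank 𝔽 (𝔽 → 𝔽) = Fintype.card 𝔽 :=
    Module.finrank_fintype_fun_eq_card 𝔽
  have hmono : Module.finrank 𝔽 U ≤ Module.finrank 𝔽 (LinearMap.ker R) :=
    Submodule.finrank_mono hUker
  omega

lemma finrank_inf_ker_ge (U : Submodule 𝔽 (𝔽 → 𝔽)) (θ : (𝔽 → 𝔽) →ₗ[𝔽] 𝔽) :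
    Module.finrank 𝔽 U ≤ Module.finrank 𝔽 ↥(U ⊓ LinearMap.ker θ) + 1 := by
  have h := LinearMap.finrank_range_add_finrank_ker (θ.domRestrict U)
  have hr1 : Module.finrank 𝔽 (LinearMap.range (θ.domRestrict U)) ≤ 1 := by
    have := Submodule.finrank_le (LinearMap.range (θ.domRestrict U))
    simpa [Module.finrank_self] using this
  have hker : Module.finrank 𝔽 (LinearMap.ker (θ.domRestrict U))
      = Module.finrank 𝔽 ↥(U ⊓ LinearMap.ker θ) := by
    rw [LinearMap.ker_domRestrict]
    have e := Submodule.equivMapOfInjective U.subtype (Submodule.injective_subtype U)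
      (Submodule.comap U.subtype (LinearMap.ker θ))
    have hmap : Submodule.map U.subtype (Submodule.comap U.subtype (LinearMap.ker θ))
        = U ⊓ LinearMap.ker θ := Submodule.map_comap_subtype U (LinearMap.ker θ)
    rw [hmap] at e
    exact e.finrank_eq
  omega

noncomputable def Lmap (A : 𝔽 → 𝔽 → 𝔽) (y : 𝔽) : (𝔽 → 𝔽) →ₗ[𝔽] 𝔽 :=
  ∑ x : 𝔽, A y x • LinearMap.proj x

lemma Lmap_apply (A : 𝔽 → 𝔽 → 𝔽) (y : 𝔽) (f : 𝔽 → 𝔽) :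
    Lmap A y f = ∑ x : 𝔽, A y x * f x := by
  simp [Lmap, LinearMap.sum_apply, LinearMap.smul_apply, smul_eq_mul]

section core

variable {W : Type} [AddCommGroup W] [Module 𝔽 W] [DecidableEq W]

lemma core_count (A : 𝔽 → 𝔽 → 𝔽) (Bc : 𝔽 → 𝔽) (Ψ : (𝔽 → 𝔽) →ₗ[𝔽] W) (w : W) (r : ℕ)
    (hr : Fintype.card 𝔽 ≤ Module.finrank 𝔽 (LinearMap.ker Ψ) + r) :
    ∑ y : 𝔽, ((univ.filter fun f : 𝔽 → 𝔽 => Ψ f = w).filter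
        (fun f => f (Lmap A y f + Bc y) = y)).card
      ≤ (2*r+2) * (univ.filter fun f : 𝔽 → 𝔽 => Ψ f = w).card := by
  set n := Fintype.card 𝔽 with hn
  have hnpos : 0 < n := Fintype.card_pos
  set cell : Finset (𝔽 → 𝔽) := univ.filter fun f : 𝔽 → 𝔽 => Ψ f = w with hcell
  set U : Submodule 𝔽 (𝔽 → 𝔽) := LinearMap.ker Ψ with hU
  set Fx : Finset 𝔽 := univ.filter (fun x : 𝔽 => ∀ f ∈ U, f x = 0) with hFxdef
  have hFx : Fx.card ≤ r := by
    have h2 := fix_card_le U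
    rw [← hFxdef] at h2
    omega
  let C : 𝔽 → 𝔽 → Finset (𝔽 → 𝔽) :=
    fun y x => univ.filter
      (fun f : 𝔽 → 𝔽 => (Ψ f = w ∧ Lmap A y f = x - Bc y) ∧ f x = y)
  have hC : ∀ y x, C y x = univ.filter
      (fun f : 𝔽 → 𝔽 => (Ψ f = w ∧ Lmap A y f = x - Bc y) ∧ f x = y) := fun y x => rfl
  -- decomposition of the success count over realized inversion points
  have hdecomp : ∀ y : 𝔽,
      ((cell.filter (fun f => f (Lmap A y f + Bc y) = y)).card : ℕ)
        = ∑ x : 𝔽, (C y x).card := by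
    intro y
    rw [Finset.card_eq_sum_card_fiberwise
      (f := fun f : 𝔽 → 𝔽 => Lmap A y f + Bc y) (t := univ) (fun f _ => mem_univ _)]
    refine Finset.sum_congr rfl (fun x _ => ?_)
    congr 1
    rw [Finset.filter_filter, hcell, Finset.filter_filter, hC]
    apply Finset.filter_congr
    intro f _
    constructor
    · rintro ⟨hf1, hf2, hf3⟩
      refine ⟨⟨hf1, eq_sub_iff_add_eq.mpr hf3⟩, by rw [← hf3]; exact hf2⟩
    · rintro ⟨⟨hf1, hf2⟩, hf3⟩
      have hx : Lmap A y f + Bc y = x := by rw [hf2]; ring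
      exact ⟨hf1, by rw [hx]; exact hf3, hx⟩
  have hCsub : ∀ y x, C y x ⊆ cell := by
    intro y x f hf
    rw [hC] at hf; simp only [Finset.mem_filter, Finset.mem_univ, true_and] at hf
    simp only [hcell, Finset.mem_filter, Finset.mem_univ, true_and]
    exact hf.1.1
  -- Part A : x ∈ Fx
  have hPartA : ∑ y : 𝔽, ∑ x ∈ Fx, (C y x).card ≤ r * cell.card := by
    rw [Finset.sum_comm]
    calc ∑ x ∈ Fx, ∑ y : 𝔽, (C y x).card
        ≤ ∑ _x ∈ Fx, cell.card := by
          refine Finset.sum_le_sum (fun x _ => ?_)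
          have hcc : cell.card = ∑ y : 𝔽, (cell.filter (fun f => f x = y)).card :=
            Finset.card_eq_sum_card_fiberwise (fun f _ => mem_univ _)
          rw [hcc]
          refine Finset.sum_le_sum (fun y _ => ?_)
          apply Finset.card_le_card
          intro f hf
          simp only [Finset.mem_filter]
          refine ⟨hCsub y x hf, ?_⟩
          rw [hC] at hf; simp only [Finset.mem_filter, Finset.mem_univ, true_and] at hf
          exact hf.2
      _ = Fx.card * cell.card := by rw [Finset.sum_const, smul_eq_mul]
      _ ≤ r * cell.card := Nat.mul_le_mul_right _ hFx
  -- Part B : per y, x ∉ Fx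
  have hCle : ∀ (y x : 𝔽) {W2 : Type} [AddCommGroup W2] [Module 𝔽 W2] [DecidableEq W2]
      (Ψ' : (𝔽 → 𝔽) →ₗ[𝔽] W2) (w' : W2) (θ : (𝔽 → 𝔽) →ₗ[𝔽] 𝔽) (c : 𝔽),
      (∀ f : 𝔽 → 𝔽, ((Ψ f = w ∧ Lmap A y f = x - Bc y) ∧ f x = y) → (Ψ' f = w' ∧ θ f = c)) →
      (∃ u, Ψ' u = 0 ∧ θ u ≠ 0) →
      n * (C y x).card ≤ (univ.filter fun f : 𝔽 → 𝔽 => Ψ' f = w').card := by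
    intro y x W2 _ _ _ Ψ' w' θ c himp hwit
    have hsub : (C y x).card ≤ (univ.filter fun f : 𝔽 → 𝔽 => Ψ' f = w' ∧ θ f = c).card := by
      apply Finset.card_le_card
      intro f hf
      rw [hC] at hf
      simp only [Finset.mem_filter, Finset.mem_univ, true_and] at hf ⊢
      exact himp f hf
    calc n * (C y x).card ≤ n * (univ.filter fun f : 𝔽 → 𝔽 => Ψ' f = w' ∧ θ f = c).card :=
          Nat.mul_le_mul_left _ hsub
      _ ≤ (univ.filter fun f : 𝔽 → 𝔽 => Ψ' f = w').card := fib_card_le Ψ' θ hwit w' c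
  have hPartB : ∀ y : 𝔽,
      n * (∑ x ∈ univ \ Fx, (C y x).card) ≤ (r+2) * cell.card := by
    intro y
    have honele : cell.card ≤ (r+2) * cell.card := Nat.le_mul_of_pos_left _ (by omega)
    by_cases hLnull : ∀ f ∈ U, Lmap A y f = 0
    · -- L vanishes on ker Ψ : at most one x with C y x nonempty
      by_cases hex : ∃ x₀, x₀ ∈ univ \ Fx ∧ (C y x₀).Nonempty
      · obtain ⟨x₀, hx₀mem, f₀, hf₀⟩ := hex
        rw [hC] at hf₀
        simp only [Finset.mem_filter, Finset.mem_univ, true_and] at hf₀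
        have hzero : ∀ x ∈ univ \ Fx, x ≠ x₀ → (C y x).card = 0 := by
          intro x _ hxne
          rw [Finset.card_eq_zero]
          rcases Finset.eq_empty_or_nonempty (C y x) with h | ⟨f, hf⟩
          · exact h
          · exfalso
            rw [hC] at hf
            simp only [Finset.mem_filter, Finset.mem_univ, true_and] at hf
            have hdiff : f - f₀ ∈ U := by
              rw [hU, LinearMap.mem_ker, map_sub, hf.1.1, hf₀.1.1, sub_self]
            have hLd := hLnull _ hdiff
            rw [map_sub, sub_eq_zero] at hLd
            have hxx : x - Bc y = x₀ - Bc y := by rw [← hf.1.2, ← hf₀.1.2, hLd]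
            exact hxne (sub_left_inj.mp hxx)
        have hsum : ∑ x ∈ univ \ Fx, (C y x).card = (C y x₀).card :=
          Finset.sum_eq_single_of_mem x₀ hx₀mem hzero
        rw [hsum]
        have hx₀ : x₀ ∉ Fx := (Finset.mem_sdiff.mp hx₀mem).2
        rw [hFxdef] at hx₀
        simp only [Finset.mem_filter, Finset.mem_univ, true_and, not_forall] at hx₀
        obtain ⟨u, huU, hux⟩ := hx₀
        have hle := hCle y x₀ Ψ w (LinearMap.proj x₀) y
          (fun f hf => ⟨hf.1.1, hf.2⟩)
          ⟨u, by rwa [hU, LinearMap.mem_ker] at huU, hux⟩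
        exact le_trans hle honele
      · push_neg at hex
        have hz : ∑ x ∈ univ \ Fx, (C y x).card = 0 := by
          apply Finset.sum_eq_zero
          intro x hx
          rw [Finset.card_eq_zero]
          rcases Finset.eq_empty_or_nonempty (C y x) with h | h
          · exact h
          · exact absurd h (Finset.not_nonempty_iff_eq_empty.mpr (hex x hx))
        rw [hz, Nat.mul_zero]
        exact Nat.zero_le _
    · -- L does not vanish on ker Ψ
      push_neg at hLnull
      obtain ⟨u₁, hu₁U, hu₁L⟩ := hLnull
      have hu₁Ψ : Ψ u₁ = 0 := by rwa [hU, LinearMap.mem_ker] at hu₁U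
      set U' : Submodule 𝔽 (𝔽 → 𝔽) := U ⊓ LinearMap.ker (Lmap A y) with hU'
      set Fx' : Finset 𝔽 := univ.filter (fun x : 𝔽 => ∀ f ∈ U', f x = 0) with hFx'def
      have hFx' : Fx'.card ≤ r + 1 := by
        have h2 := fix_card_le U'
        rw [← hFx'def] at h2
        have h3 := finrank_inf_ker_ge U (Lmap A y)
        rw [← hU'] at h3
        omega
      -- split on membership in Fx'
      have hsplit2 := Finset.sum_filter_add_sum_filter_not (univ \ Fx)
        (fun x => x ∈ Fx') (fun x => (C y x).card)
      -- bound on Fx' part : each term n * card ≤ cell.card, at most r+1 terms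
      have hbnd1 : n * ∑ x ∈ (univ \ Fx).filter (fun x => x ∈ Fx'), (C y x).card
          ≤ (r+1) * cell.card := by
        rw [Finset.mul_sum]
        calc ∑ x ∈ (univ \ Fx).filter (fun x => x ∈ Fx'), n * (C y x).card
            ≤ ∑ _x ∈ (univ \ Fx).filter (fun x => x ∈ Fx'), cell.card := by
              refine Finset.sum_le_sum (fun x _ => ?_)
              have := hCle y x Ψ w (Lmap A y) (x - Bc y)
                (fun f hf => ⟨hf.1.1, hf.1.2⟩) ⟨u₁, hu₁Ψ, hu₁L⟩
              exact this
          _ = ((univ \ Fx).filter (fun x => x ∈ Fx')).card * cell.card := by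
              rw [Finset.sum_const, smul_eq_mul]
          _ ≤ (r+1) * cell.card := by
              refine Nat.mul_le_mul_right _ ?_
              calc ((univ \ Fx).filter (fun x => x ∈ Fx')).card
                  ≤ Fx'.card := by
                    apply Finset.card_le_card
                    intro x hx
                    exact (Finset.mem_filter.mp hx).2
                _ ≤ r + 1 := hFx'
      -- bound off Fx' : each term n^2 * card ≤ cell.card, at most n terms
      have hbnd2 : (n*n) * ∑ x ∈ (univ \ Fx).filter (fun x => x ∉ Fx'), (C y x).card
          ≤ n * cell.card := by
        rw [Finset.mul_sum]
        calc ∑ x ∈ (univ \ Fx).filter (fun x => x ∉ Fx'), (n*n) * (C y x).card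
            ≤ ∑ _x ∈ (univ \ Fx).filter (fun x => x ∉ Fx'), cell.card := by
              refine Finset.sum_le_sum (fun x hx => ?_)
              have hxFx' : x ∉ Fx' := (Finset.mem_filter.mp hx).2
              rw [hFx'def] at hxFx'
              simp only [Finset.mem_filter, Finset.mem_univ, true_and, not_forall] at hxFx'
              obtain ⟨u₂, hu₂U', hu₂x⟩ := hxFx'
              rw [hU', Submodule.mem_inf] at hu₂U'
              have hu₂Ψ : Ψ u₂ = 0 := by
                have := hu₂U'.1; rwa [hU, LinearMap.mem_ker] at this
              have hu₂L : Lmap A y u₂ = 0 := by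
                have := hu₂U'.2; rwa [LinearMap.mem_ker] at this
              -- double application via the product map
              set Ψ₂ : (𝔽 → 𝔽) →ₗ[𝔽] W × 𝔽 := Ψ.prod (Lmap A y) with hΨ₂
              have hstep1 : n * (C y x).card
                  ≤ (univ.filter fun f : 𝔽 → 𝔽 => Ψ₂ f = (w, x - Bc y)).card := by
                apply hCle y x Ψ₂ (w, x - Bc y) (LinearMap.proj x) y
                · intro f hf
                  refine ⟨?_, hf.2⟩
                  rw [hΨ₂]
                  simp only [LinearMap.prod_apply, Function.prod, Prod.mk.injEq]
                  exact ⟨hf.1.1, hf.1.2⟩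
                · refine ⟨u₂, ?_, hu₂x⟩
                  rw [hΨ₂]
                  simp only [LinearMap.prod_apply, Function.prod, Prod.mk.injEq]
                  simp [hu₂Ψ, hu₂L, Prod.ext_iff]
              have hstep2 : n * (univ.filter fun f : 𝔽 → 𝔽 => Ψ₂ f = (w, x - Bc y)).card
                  ≤ cell.card := by
                have heq : (univ.filter fun f : 𝔽 → 𝔽 => Ψ₂ f = (w, x - Bc y))
                    = (univ.filter fun f : 𝔽 → 𝔽 => Ψ f = w ∧ Lmap A y f = x - Bc y) := by
                  apply Finset.filter_congr
                  intro f _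
                  rw [hΨ₂]
                  simp only [LinearMap.prod_apply, Function.prod, Prod.mk.injEq]
                have hfib := fib_card_le Ψ (Lmap A y) ⟨u₁, hu₁Ψ, hu₁L⟩ w (x - Bc y)
                rw [heq]
                exact hfib
              calc (n*n) * (C y x).card = n * (n * (C y x).card) := by ring
                _ ≤ n * (univ.filter fun f : 𝔽 → 𝔽 => Ψ₂ f = (w, x - Bc y)).card :=
                    Nat.mul_le_mul_left _ hstep1
                _ ≤ cell.card := hstep2
          _ = ((univ \ Fx).filter (fun x => x ∉ Fx')).card * cell.card := by
              rw [Finset.sum_const, smul_eq_mul]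
          _ ≤ n * cell.card := by
              refine Nat.mul_le_mul_right _ ?_
              calc ((univ \ Fx).filter (fun x => x ∉ Fx')).card
                  ≤ (univ : Finset 𝔽).card := Finset.card_le_card (by intro x hx; exact mem_univ x)
                _ = n := by rw [card_univ]
      -- combine the two bounds
      have hcomb : (n*n) * (∑ x ∈ univ \ Fx, (C y x).card) ≤ n * ((r+2) * cell.card) := by
        rw [← hsplit2, Nat.mul_add]
        have h1 : (n*n) * ∑ x ∈ (univ \ Fx).filter (fun x => x ∈ Fx'), (C y x).card
            ≤ n * ((r+1) * cell.card) := by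
          calc (n*n) * ∑ x ∈ (univ \ Fx).filter (fun x => x ∈ Fx'), (C y x).card
              = n * (n * ∑ x ∈ (univ \ Fx).filter (fun x => x ∈ Fx'), (C y x).card) := by ring
            _ ≤ n * ((r+1) * cell.card) := Nat.mul_le_mul_left _ hbnd1
        calc (n*n) * ∑ x ∈ (univ \ Fx).filter (fun x => x ∈ Fx'), (C y x).card
              + (n*n) * ∑ x ∈ (univ \ Fx).filter (fun x => x ∉ Fx'), (C y x).card
            ≤ n * ((r+1) * cell.card) + n * cell.card := Nat.add_le_add h1 hbnd2
          _ = n * ((r+2) * cell.card) := by ring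
      have := Nat.le_of_mul_le_mul_left (by
        calc n * (n * (∑ x ∈ univ \ Fx, (C y x).card))
            = (n*n) * (∑ x ∈ univ \ Fx, (C y x).card) := by ring
          _ ≤ n * ((r+2) * cell.card) := hcomb) hnpos
      exact this
  -- combine
  have hsplitx : ∀ y : 𝔽, ∑ x : 𝔽, (C y x).card
      = ∑ x ∈ Fx, (C y x).card + ∑ x ∈ univ \ Fx, (C y x).card := by
    intro y
    rw [← Finset.sum_sdiff (Finset.subset_univ Fx)]
    ring
  have hB' : n * ∑ y : 𝔽, ∑ x ∈ univ \ Fx, (C y x).card ≤ n * ((r+2) * cell.card) := by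
    rw [Finset.mul_sum]
    calc ∑ y : 𝔽, n * ∑ x ∈ univ \ Fx, (C y x).card
        ≤ ∑ _y : 𝔽, (r+2) * cell.card := Finset.sum_le_sum (fun y _ => hPartB y)
      _ = n * ((r+2) * cell.card) := by rw [Finset.sum_const, smul_eq_mul, card_univ]
  have hB'' : ∑ y : 𝔽, ∑ x ∈ univ \ Fx, (C y x).card ≤ (r+2) * cell.card :=
    Nat.le_of_mul_le_mul_left hB' hnpos
  calc ∑ y : 𝔽, ((cell.filter (fun f => f (Lmap A y f + Bc y) = y)).card)
      = ∑ y : 𝔽, (∑ x ∈ Fx, (C y x).card + ∑ x ∈ univ \ Fx, (C y x).card) := by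
        refine Finset.sum_congr rfl (fun y _ => ?_)
        rw [hdecomp y, hsplitx y]
    _ = (∑ y : 𝔽, ∑ x ∈ Fx, (C y x).card) + ∑ y : 𝔽, ∑ x ∈ univ \ Fx, (C y x).card :=
        Finset.sum_add_distrib
    _ ≤ r * cell.card + (r+2) * cell.card := Nat.add_le_add hPartA hB''
    _ = (2*r+2) * cell.card := by ring

end core

variable (A : 𝔽 → 𝔽 → 𝔽) (Bc : 𝔽 → 𝔽)

def succ (y : 𝔽) (f : 𝔽 → 𝔽) : Prop := f (Lmap A y f + Bc y) = y

noncomputable def Kc (f : 𝔽 → 𝔽) : ℕ := (univ.filter fun y => succ A Bc y f).card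

lemma cell_decomp (m : ℕ) (g : Fin m → 𝔽) :
    ∑ f ∈ univ.filter (fun f : 𝔽 → 𝔽 => ∀ j, succ A Bc (g j) f), Kc A Bc f
      ≤ (4*m+2) * (univ.filter (fun f : 𝔽 → 𝔽 => ∀ j, succ A Bc (g j) f)).card := by
  set P : Finset (𝔽 → 𝔽) := univ.filter (fun f : 𝔽 → 𝔽 => ∀ j, succ A Bc (g j) f) with hP
  set key : (𝔽 → 𝔽) → (Fin m → 𝔽) := fun f j => Lmap A (g j) f + Bc (g j) with hkey
  have hfib : ∑ f ∈ P, Kc A Bc f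
      = ∑ v : Fin m → 𝔽, ∑ f ∈ P.filter (fun f => key f = v), Kc A Bc f :=
    (Finset.sum_fiberwise P key (Kc A Bc)).symm
  have hfibc : P.card = ∑ v : Fin m → 𝔽, (P.filter (fun f => key f = v)).card :=
    Finset.card_eq_sum_card_fiberwise (fun f _ => mem_univ _)
  -- identify each fiber as the fiber of a linear map
  have hcell : ∀ v : Fin m → 𝔽,
      P.filter (fun f => key f = v)
        = univ.filter (fun f : 𝔽 → 𝔽 =>
            (LinearMap.prod (LinearMap.pi fun j : Fin m => Lmap A (g j))
              (LinearMap.pi fun j : Fin m => LinearMap.proj (v j))) f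
            = (fun j => v j - Bc (g j), g)) := by
    intro v
    rw [hP, Finset.filter_filter]
    apply Finset.filter_congr
    intro f _
    simp only [LinearMap.prod_apply, Function.prod, LinearMap.pi_apply, LinearMap.proj_apply,
      Prod.mk.injEq, funext_iff]
    constructor
    · rintro ⟨hsucc, hkeyv⟩
      have hkeyv' : ∀ j, Lmap A (g j) f + Bc (g j) = v j := fun j => hkeyv j
      constructor
      · intro j
        rw [← hkeyv' j]; ring
      · intro j
        rw [← hkeyv' j]
        exact hsucc j
    · rintro ⟨hL, hE⟩
      have hkeyv' : ∀ j, Lmap A (g j) f + Bc (g j) = v j := by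
        intro j; rw [hL j]; ring
      constructor
      · intro j
        show f (Lmap A (g j) f + Bc (g j)) = g j
        rw [hkeyv' j]
        exact hE j
      · intro j
        exact hkeyv' j
  -- rank bound for the linear map
  have hrank : ∀ v : Fin m → 𝔽, Fintype.card 𝔽
      ≤ Module.finrank 𝔽 (LinearMap.ker
          (LinearMap.prod (LinearMap.pi fun j : Fin m => Lmap A (g j))
            (LinearMap.pi fun j : Fin m => LinearMap.proj (v j)))) + 2*m := by
    intro v
    set Φ := LinearMap.prod (LinearMap.pi fun j : Fin m => Lmap A (g j))
      (LinearMap.pi fun j : Fin m => LinearMap.proj (v j)) with hΦ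
    have h1 := LinearMap.finrank_range_add_finrank_ker Φ
    rw [Module.finrank_fintype_fun_eq_card] at h1
    have h2 : Module.finrank 𝔽 (LinearMap.range Φ) ≤ 2*m := by
      calc Module.finrank 𝔽 (LinearMap.range Φ)
          ≤ Module.finrank 𝔽 ((Fin m → 𝔽) × (Fin m → 𝔽)) := Submodule.finrank_le _
        _ = 2*m := by
            rw [Module.finrank_prod, Module.finrank_fintype_fun_eq_card, Fintype.card_fin]
            ring
    omega
  -- per-fiber application of the core bound
  have hper : ∀ v : Fin m → 𝔽,
      ∑ f ∈ P.filter (fun f => key f = v), Kc A Bc f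
        ≤ (4*m+2) * (P.filter (fun f => key f = v)).card := by
    intro v
    rw [hcell v]
    have hsum : ∑ f ∈ univ.filter (fun f : 𝔽 → 𝔽 =>
          (LinearMap.prod (LinearMap.pi fun j : Fin m => Lmap A (g j))
            (LinearMap.pi fun j : Fin m => LinearMap.proj (v j))) f
          = (fun j => v j - Bc (g j), g)), Kc A Bc f
        = ∑ y : 𝔽, ((univ.filter (fun f : 𝔽 → 𝔽 =>
            (LinearMap.prod (LinearMap.pi fun j : Fin m => Lmap A (g j))
              (LinearMap.pi fun j : Fin m => LinearMap.proj (v j))) f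
            = (fun j => v j - Bc (g j), g))).filter
            (fun f => f (Lmap A y f + Bc y) = y)).card := by
      simp_rw [Kc, Finset.card_filter]
      rw [Finset.sum_comm]
      refine Finset.sum_congr rfl fun y _ => Finset.sum_congr rfl fun f _ => ?_
      congr 1
    rw [hsum]

    have := core_count A Bc
      (LinearMap.prod (LinearMap.pi fun j : Fin m => Lmap A (g j))
        (LinearMap.pi fun j : Fin m => LinearMap.proj (v j)))
      ((fun j => v j - Bc (g j), g)) (2*m) (hrank v)
    calc ∑ y : 𝔽, ((univ.filter (fun f : 𝔽 → 𝔽 =>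
            (LinearMap.prod (LinearMap.pi fun j : Fin m => Lmap A (g j))
              (LinearMap.pi fun j : Fin m => LinearMap.proj (v j))) f
            = (fun j => v j - Bc (g j), g))).filter
            (fun f => f (Lmap A y f + Bc y) = y)).card
        ≤ (2*(2*m)+2) * (univ.filter (fun f : 𝔽 → 𝔽 =>
            (LinearMap.prod (LinearMap.pi fun j : Fin m => Lmap A (g j))
              (LinearMap.pi fun j : Fin m => LinearMap.proj (v j))) f
            = (fun j => v j - Bc (g j), g))).card := this
      _ = (4*m+2) * (univ.filter (fun f : 𝔽 → 𝔽 =>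
            (LinearMap.prod (LinearMap.pi fun j : Fin m => Lmap A (g j))
              (LinearMap.pi fun j : Fin m => LinearMap.proj (v j))) f
            = (fun j => v j - Bc (g j), g))).card := by ring_nf
  calc ∑ f ∈ P, Kc A Bc f
      = ∑ v : Fin m → 𝔽, ∑ f ∈ P.filter (fun f => key f = v), Kc A Bc f := hfib
    _ ≤ ∑ v : Fin m → 𝔽, (4*m+2) * (P.filter (fun f => key f = v)).card :=
        Finset.sum_le_sum (fun v _ => hper v)
    _ = (4*m+2) * P.card := by rw [← Finset.mul_sum, ← hfibc]

lemma moment_step (i : ℕ) (hi : 1 ≤ i) :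
    ∑ f : 𝔽 → 𝔽, (Kc A Bc f)^i ≤ (4*i-2) * ∑ f : 𝔽 → 𝔽, (Kc A Bc f)^(i-1) := by
  obtain ⟨m, rfl⟩ : ∃ m, i = m + 1 := ⟨i - 1, by omega⟩
  have hm : m + 1 - 1 = m := by omega
  rw [hm]
  have hpow : ∀ f : 𝔽 → 𝔽, (Kc A Bc f)^m
      = ∑ g : Fin m → 𝔽, ∏ j : Fin m, (if succ A Bc (g j) f then 1 else 0) := by
    intro f
    have h1 : Kc A Bc f = ∑ y : 𝔽, (if succ A Bc y f then 1 else 0) := Finset.card_filter _ _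
    rw [h1]
    have h2 : (∑ y : 𝔽, if succ A Bc y f then 1 else 0)^m
        = ∏ _j : Fin m, (∑ y : 𝔽, if succ A Bc y f then 1 else 0) := by
      rw [Finset.prod_const, card_univ, Fintype.card_fin]
    rw [h2, Finset.prod_univ_sum]
    rw [Fintype.piFinset_univ]
  have hswap : ∑ f : 𝔽 → 𝔽, (Kc A Bc f)^(m+1)
      = ∑ g : Fin m → 𝔽, ∑ f ∈ univ.filter (fun f : 𝔽 → 𝔽 => ∀ j, succ A Bc (g j) f),
          Kc A Bc f := by
    have h3 : ∀ f : 𝔽 → 𝔽, (Kc A Bc f)^(m+1) = (Kc A Bc f)^m * Kc A Bc f := by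
      intro f; ring
    simp_rw [h3, hpow, Finset.sum_mul]
    rw [Finset.sum_comm]
    refine Finset.sum_congr rfl (fun g _ => ?_)
    rw [Finset.sum_filter]
    refine Finset.sum_congr rfl (fun f _ => ?_)
    rw [Finset.prod_boole]
    simp only [Finset.mem_univ, true_implies]
    by_cases h : ∀ j, succ A Bc (g j) f
    · rw [if_pos h, if_pos h, one_mul]
    · rw [if_neg h, if_neg h, zero_mul]
  have hswap2 : ∑ f : 𝔽 → 𝔽, (Kc A Bc f)^m
      = ∑ g : Fin m → 𝔽, (univ.filter (fun f : 𝔽 → 𝔽 => ∀ j, succ A Bc (g j) f)).card := by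
    simp_rw [hpow]
    rw [Finset.sum_comm]
    refine Finset.sum_congr rfl (fun g _ => ?_)
    rw [Finset.card_filter]
    refine Finset.sum_congr rfl (fun f _ => ?_)
    rw [Finset.prod_boole]
    simp only [Finset.mem_univ, true_implies]
  have h4 : 4*(m+1)-2 = 4*m+2 := by clear * -; omega
  rw [hswap]
  rw [h4]
  rw [hswap2]
  rw [Finset.mul_sum]
  exact Finset.sum_le_sum (fun g _ => cell_decomp A Bc m g)

lemma Kc_le (f : 𝔽 → 𝔽) : Kc A Bc f ≤ Fintype.card 𝔽 := by
  calc Kc A Bc f ≤ (univ : Finset 𝔽).card := Finset.card_le_card (Finset.filter_subset _ _)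
    _ = Fintype.card 𝔽 := card_univ

lemma card_filter_lt (n i : ℕ) (hi : i ≤ n) :
    (univ.filter (fun j : Fin n => (j : ℕ) < i)).card = i := by
  have hb : (univ.filter (fun j : Fin n => (j : ℕ) < i)).card = (univ : Finset (Fin i)).card := by
    refine Finset.card_bij' (fun j hj => (⟨(j : ℕ), (Finset.mem_filter.mp hj).2⟩ : Fin i))
      (fun k _ => (⟨(k : ℕ), lt_of_lt_of_le k.2 hi⟩ : Fin n)) ?_ ?_ ?_ ?_
    · intro j hj
      exact mem_univ _
    · intro k _
      simp only [Finset.mem_filter, Finset.mem_univ, true_and]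
      exact k.2
    · intro j hj
      rfl
    · intro k _
      rfl
  rw [hb, card_univ, Fintype.card_fin]

lemma count_eq (n : ℕ) (hn : Fintype.card 𝔽 = n) (i : ℕ) (hi : i ≤ n) :
    Nat.card {fy : (𝔽 → 𝔽) × (Fin n → 𝔽) //
        ∀ j : Fin n, (j : ℕ) < i → succ A Bc (fy.2 j) fy.1}
      = ∑ f : 𝔽 → 𝔽, (Kc A Bc f)^i * n^(n-i) := by
  rw [Nat.card_eq_fintype_card]
  rw [Fintype.card_congr (Equiv.subtypeProdEquivSigmaSubtype
    (fun (f : 𝔽 → 𝔽) (yv : Fin n → 𝔽) => ∀ j : Fin n, (j : ℕ) < i → succ A Bc (yv j) f))]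
  rw [Fintype.card_sigma]
  refine Finset.sum_congr rfl (fun f _ => ?_)
  rw [Fintype.card_congr (Equiv.subtypePiEquivPi
    (p := fun (j : Fin n) (y : 𝔽) => (j : ℕ) < i → succ A Bc y f))]
  rw [Fintype.card_pi]
  have hcard : ∀ j : Fin n, Fintype.card {y : 𝔽 // (j : ℕ) < i → succ A Bc y f}
      = if (j : ℕ) < i then Kc A Bc f else n := by
    intro j
    rw [Fintype.card_subtype]
    by_cases h : (j : ℕ) < i
    · rw [if_pos h]
      rw [Kc]
      congr 1
      apply Finset.filter_congr
      intro y _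
      simp only [h, true_implies]
    · rw [if_neg h]
      have heq : (univ.filter (fun y : 𝔽 => (j : ℕ) < i → succ A Bc y f)) = univ := by
        apply Finset.filter_true_of_mem
        intro y _
        intro hc
        exact absurd hc h
      rw [heq, card_univ, hn]
  simp_rw [hcard]
  rw [Finset.prod_ite (fun _ => Kc A Bc f) (fun _ => n)]
  rw [Finset.prod_const, Finset.prod_const]
  have hflt : (univ.filter (fun j : Fin n => (j : ℕ) < i)).card = i := card_filter_lt n i hi
  have hnot : (univ.filter (fun j : Fin n => ¬ (j : ℕ) < i)).card = n - i := by
    have hadd := Finset.card_filter_add_card_filter_not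
      (s := (univ : Finset (Fin n))) (p := fun j : Fin n => (j : ℕ) < i)
    rw [card_univ, Fintype.card_fin] at hadd
    omega
  rw [hflt, hnot]

lemma moment_counts (n : ℕ) (hn : Fintype.card 𝔽 = n) (i : ℕ) (hi1 : 1 ≤ i) (hin : i ≤ n) :
    n * (∑ f : 𝔽 → 𝔽, (Kc A Bc f)^i * n^(n-i))
      ≤ (4*i-2) * ∑ f : 𝔽 → 𝔽, (Kc A Bc f)^(i-1) * n^(n-(i-1)) := by
  have hstep := moment_step A Bc i hi1
  have he : n - (i-1) = (n - i) + 1 := by omega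
  calc n * (∑ f : 𝔽 → 𝔽, (Kc A Bc f)^i * n^(n-i))
      = ∑ f : 𝔽 → 𝔽, (Kc A Bc f)^i * n^(n-i+1) := by
        rw [Finset.mul_sum]
        refine Finset.sum_congr rfl (fun f _ => ?_)
        ring
    _ = (∑ f : 𝔽 → 𝔽, (Kc A Bc f)^i) * n^(n-i+1) := (Finset.sum_mul _ _ _).symm
    _ ≤ ((4*i-2) * ∑ f : 𝔽 → 𝔽, (Kc A Bc f)^(i-1)) * n^(n-i+1) :=
        Nat.mul_le_mul_right _ hstep
    _ = (4*i-2) * ∑ f : 𝔽 → 𝔽, (Kc A Bc f)^(i-1) * n^(n-(i-1)) := by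
        rw [he, mul_assoc, Finset.sum_mul]

lemma counts_mono (n : ℕ) (hn : Fintype.card 𝔽 = n) (i : ℕ) (hi1 : 1 ≤ i) (hin : i ≤ n) :
    (∑ f : 𝔽 → 𝔽, (Kc A Bc f)^i * n^(n-i))
      ≤ ∑ f : 𝔽 → 𝔽, (Kc A Bc f)^(i-1) * n^(n-(i-1)) := by
  refine Finset.sum_le_sum (fun f _ => ?_)
  have hK : Kc A Bc f ≤ n := hn ▸ Kc_le A Bc f
  have h1 : (Kc A Bc f)^i = (Kc A Bc f)^(i-1) * Kc A Bc f := by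
    conv_lhs => rw [show i = (i-1)+1 by omega]
    ring
  have h2 : n - (i-1) = (n-i)+1 := by omega
  rw [h1, h2]
  calc (Kc A Bc f)^(i-1) * Kc A Bc f * n^(n-i)
      ≤ (Kc A Bc f)^(i-1) * n * n^(n-i) :=
        Nat.mul_le_mul_right _ (Nat.mul_le_mul_left _ hK)
    _ = (Kc A Bc f)^(i-1) * n^(n-i+1) := by ring

end Stmt7Aux

/-- Let `𝔽` be a finite field with exactly `n` elements, identified with
`[n]` (so functions `[n] → [n]` are vectors in `𝔽^n`, indexed by `𝔽`). Let `Inv` be a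
zero-advice non-adaptive inverter with an affine decoder: for every `y` there are
`α^y ∈ 𝔽^n`, `β^y ∈ 𝔽` with `Inv(y; f) = ⟨α^y, f⟩ + β^y` for all `f`. With `F` uniform
over `F_n` and `Y = (Y_1,…,Y_n)` uniform over `[n]^n` independent of `F`, and `Z_i` the
event `∀ j ≤ i, F(Inv(Y_j; F)) = Y_j`, for every `i ∈ [n]` and `μ ∈ (0,1/2]`:
`Pr[Z_i] ≤ ((2i-1)/n + μ + 2^(2⌈μn⌉log₂(1/μ) − ⌈μn⌉log₂ n + (2i−2)log₂ n)) Pr[Z_{i-1}]`. -/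
theorem stmt_7 {𝔽 : Type} [Field 𝔽] [Fintype 𝔽] (n : ℕ) (hn : Fintype.card 𝔽 = n)
    (Inv : 𝔽 → (𝔽 → 𝔽) → 𝔽)
    (haff : ∀ y : 𝔽, ∃ (α : 𝔽 → 𝔽) (β : 𝔽),
      ∀ f : 𝔽 → 𝔽, Inv y f = (∑ x : 𝔽, α x * f x) + β)
    (i : ℕ) (hi1 : 1 ≤ i) (hin : i ≤ n)
    (μ : ℝ) (hμ0 : 0 < μ) (hμ : μ ≤ 1 / 2) :
    (Nat.card {fy : (𝔽 → 𝔽) × (Fin n → 𝔽) //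
        ∀ j : Fin n, (j : ℕ) < i → fy.1 (Inv (fy.2 j) fy.1) = fy.2 j} : ℝ)
      / (Nat.card ((𝔽 → 𝔽) × (Fin n → 𝔽))) ≤
    ((2 * (i : ℝ) - 1) / n + μ
        + (2 : ℝ) ^ (2 * (⌈μ * n⌉₊ : ℝ) * Real.logb 2 (1 / μ)
            - (⌈μ * n⌉₊ : ℝ) * Real.logb 2 n + (2 * (i : ℝ) - 2) * Real.logb 2 n))
      * ((Nat.card {fy : (𝔽 → 𝔽) × (Fin n → 𝔽) //
          ∀ j : Fin n, (j : ℕ) < i - 1 → fy.1 (Inv (fy.2 j) fy.1) = fy.2 j} : ℝ)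
        / (Nat.card ((𝔽 → 𝔽) × (Fin n → 𝔽)))) := by
  classical
  choose A Bc hAB using haff
  have hiff : ∀ (y : 𝔽) (f : 𝔽 → 𝔽), (f (Inv y f) = y) ↔ Stmt7Aux.succ A Bc y f := by
    intro y f
    rw [hAB y f, Stmt7Aux.succ, Stmt7Aux.Lmap_apply]
  -- cardinality identities
  have hNi : Nat.card {fy : (𝔽 → 𝔽) × (Fin n → 𝔽) //
        ∀ j : Fin n, (j : ℕ) < i → fy.1 (Inv (fy.2 j) fy.1) = fy.2 j}
      = ∑ f : 𝔽 → 𝔽, (Stmt7Aux.Kc A Bc f)^i * n^(n-i) := by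
    have e : {fy : (𝔽 → 𝔽) × (Fin n → 𝔽) //
          ∀ j : Fin n, (j : ℕ) < i → fy.1 (Inv (fy.2 j) fy.1) = fy.2 j}
        ≃ {fy : (𝔽 → 𝔽) × (Fin n → 𝔽) //
          ∀ j : Fin n, (j : ℕ) < i → Stmt7Aux.succ A Bc (fy.2 j) fy.1} :=
      Equiv.subtypeEquivRight (fun fy =>
        forall_congr' (fun j => imp_congr Iff.rfl (hiff (fy.2 j) fy.1)))
    rw [Nat.card_congr e]
    exact Stmt7Aux.count_eq A Bc n hn i hin
  have hNi1 : Nat.card {fy : (𝔽 → 𝔽) × (Fin n → 𝔽) //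
        ∀ j : Fin n, (j : ℕ) < i - 1 → fy.1 (Inv (fy.2 j) fy.1) = fy.2 j}
      = ∑ f : 𝔽 → 𝔽, (Stmt7Aux.Kc A Bc f)^(i-1) * n^(n-(i-1)) := by
    have e : {fy : (𝔽 → 𝔽) × (Fin n → 𝔽) //
          ∀ j : Fin n, (j : ℕ) < i - 1 → fy.1 (Inv (fy.2 j) fy.1) = fy.2 j}
        ≃ {fy : (𝔽 → 𝔽) × (Fin n → 𝔽) //
          ∀ j : Fin n, (j : ℕ) < i - 1 → Stmt7Aux.succ A Bc (fy.2 j) fy.1} :=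
      Equiv.subtypeEquivRight (fun fy =>
        forall_congr' (fun j => imp_congr Iff.rfl (hiff (fy.2 j) fy.1)))
    rw [Nat.card_congr e]
    exact Stmt7Aux.count_eq A Bc n hn (i-1) (by omega)
  -- abbreviations
  set NI : ℕ := Nat.card {fy : (𝔽 → 𝔽) × (Fin n → 𝔽) //
        ∀ j : Fin n, (j : ℕ) < i → fy.1 (Inv (fy.2 j) fy.1) = fy.2 j} with hNIdef
  set NI1 : ℕ := Nat.card {fy : (𝔽 → 𝔽) × (Fin n → 𝔽) //
        ∀ j : Fin n, (j : ℕ) < i - 1 → fy.1 (Inv (fy.2 j) fy.1) = fy.2 j} with hNI1def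
  set D : ℕ := Nat.card ((𝔽 → 𝔽) × (Fin n → 𝔽)) with hDdef
  set expo : ℝ := 2 * (⌈μ * n⌉₊ : ℝ) * Real.logb 2 (1 / μ)
      - (⌈μ * n⌉₊ : ℝ) * Real.logb 2 n + (2 * (i : ℝ) - 2) * Real.logb 2 n with hexpodef
  set c : ℝ := (2 * (i : ℝ) - 1) / n + μ + (2 : ℝ) ^ expo with hcdef
  -- basic positivity
  have hn2 : 2 ≤ n := by
    rw [← hn]
    exact Fintype.one_lt_card
  have hnR : (0:ℝ) < n := by
    have : 0 < n := by omega
    exact_mod_cast this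
  have hDpos : (0:ℝ) < D := by
    have : 0 < D := Nat.card_pos
    exact_mod_cast this
  have hBpos : (0:ℝ) < (2:ℝ) ^ expo := Real.rpow_pos_of_pos two_pos _
  have hNi1nonneg : (0:ℝ) ≤ (NI1 : ℝ) := Nat.cast_nonneg _
  -- reduce to numerator inequality
  rw [div_le_iff₀ hDpos]
  have hrearr : c * ((NI1 : ℝ) / D) * D = c * NI1 := by
    field_simp
  rw [hrearr]
  -- main bound
  have hmain : (NI : ℝ) ≤ c * NI1 := by
    by_cases hc : 1 ≤ c
    · have hmono : NI ≤ NI1 := by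
        rw [hNi, hNi1]
        exact Stmt7Aux.counts_mono A Bc n hn i hi1 hin
      calc (NI : ℝ) ≤ (NI1 : ℝ) := by exact_mod_cast hmono
        _ = 1 * NI1 := (one_mul _).symm
        _ ≤ c * NI1 := mul_le_mul_of_nonneg_right hc hNi1nonneg
    · push_neg at hc
      -- Step 1 : 2^expo < 1 hence expo < 0
      have h2i1 : (0:ℝ) ≤ (2 * (i : ℝ) - 1) / n := by
        have : (1:ℝ) ≤ i := by exact_mod_cast hi1
        apply div_nonneg (by linarith) (le_of_lt hnR)
      have hexpo_neg : expo < 0 := by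
        by_contra h
        push_neg at h
        have h1 : (2:ℝ) ^ (0:ℝ) ≤ (2:ℝ) ^ expo :=
          Real.rpow_le_rpow_of_exponent_le one_le_two h
        rw [Real.rpow_zero] at h1
        rw [hcdef] at hc
        linarith
      -- Step 2 : power form of expo < 0
      set S : ℕ := ⌈μ * n⌉₊ with hSdef
      have hnne : (n:ℝ) ≠ 0 := ne_of_gt hnR
      have hμne : μ ≠ 0 := ne_of_gt hμ0
      have hpow22 : (n:ℝ) ^ (2*i-2) < (μ^2 * n) ^ S := by
        have hx : (0:ℝ) < (n:ℝ) ^ (2*i-2) := by positivity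
        have hy : (0:ℝ) < (μ^2 * n) ^ S := by positivity
        rw [← Real.logb_lt_logb_iff (b := 2) one_lt_two hx hy]
        have e1 : Real.logb 2 ((n:ℝ) ^ (2*i-2)) = (2*(i:ℝ)-2) * Real.logb 2 n := by
          rw [Real.logb_pow]
          congr 1
          push_cast [Nat.cast_sub (by omega : 2 ≤ 2*i)]
          ring
        have e2 : Real.logb 2 ((μ^2 * (n:ℝ)) ^ S)
            = (S:ℝ) * (2 * Real.logb 2 μ + Real.logb 2 n) := by
          rw [Real.logb_pow]
          congr 1
          rw [Real.logb_mul (by positivity) hnne]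
          congr 1
          rw [show μ^2 = μ^(2:ℕ) by norm_num, Real.logb_pow]
          push_cast
          ring
        have e3 : Real.logb 2 (1/μ) = - Real.logb 2 μ := by
          rw [one_div, Real.logb_inv]
        rw [e1, e2]
        rw [hexpodef, e3] at hexpo_neg
        nlinarith [hexpo_neg]
      -- Step 3 : μ * n ≥ 2 * i
      have hμn : 2*(i:ℝ) ≤ μ * n := by
        by_contra hmun
        push_neg at hmun
        have hSge : μ * n ≤ (S:ℝ) := Nat.le_ceil _
        have hSle : S ≤ 2*i := by
          rw [hSdef]
          rw [Nat.ceil_le]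
          push_cast
          linarith
        have hiR : (1:ℝ) ≤ i := by exact_mod_cast hi1
        have hnn : (1:ℝ) ≤ n := by exact_mod_cast (by omega : 1 ≤ n)
        -- μ² n > 1
        have h1 : 1 < μ^2 * n := by
          by_contra h
          push_neg at h
          have ha : (μ^2 * n) ^ S ≤ 1 := pow_le_one₀ (by positivity) h
          have hb : (1:ℝ) ≤ (n:ℝ) ^ (2*i-2) := one_le_pow₀ hnn
          linarith
        have hμ2 : μ^2 ≤ 1/4 := by nlinarith
        have h4 : μ^2 * n ≤ n/4 := by nlinarith [hμ2, hnR.le]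
        have hn4 : (4:ℝ) < n := by linarith
        -- chain A : n^{2i-2} < (n/4)^{2i}  gives 4^i < n
        have hA : (μ^2 * n) ^ S ≤ ((n:ℝ)/4) ^ (2*i) := by
          calc (μ^2 * n) ^ S ≤ ((n:ℝ)/4) ^ S := pow_le_pow_left₀ (by positivity) h4 S
            _ ≤ ((n:ℝ)/4) ^ (2*i) := pow_le_pow_right₀ (by linarith) hSle
        have h16 : (4:ℝ)^i < n := by
          have hh : (n:ℝ) ^ (2*i-2) < ((n:ℝ)/4) ^ (2*i) := lt_of_lt_of_le hpow22 hA
          rw [div_pow] at hh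
          have h4pos : (0:ℝ) < (4:ℝ)^(2*i) := by positivity
          rw [lt_div_iff₀ h4pos] at hh
          have e2 : (n:ℝ)^(2*i) = (n:ℝ)^(2*i-2) * (n:ℝ)^2 := by
            rw [← pow_add]
            congr 1
            omega
          have hnp : (0:ℝ) < (n:ℝ)^(2*i-2) := by positivity
          have h42 : ((4:ℝ)^i)^2 < (n:ℝ)^2 := by
            have : (4:ℝ)^(2*i) < (n:ℝ)^2 := by
              nlinarith [hh, e2, hnp]
            calc ((4:ℝ)^i)^2 = (4:ℝ)^(2*i) := by rw [← pow_mul]; ring_nf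
              _ < (n:ℝ)^2 := this
          exact lt_of_pow_lt_pow_left₀ 2 (le_of_lt hnR) h42
        -- chain B : n^{4i-2} < (2i)^{4i}  gives contradiction with 4^i < n
        have hB : μ^2 * n < 4*(i:ℝ)^2/n := by
          rw [lt_div_iff₀ hnR]
          nlinarith [mul_pos hμ0 hnR]
        have hBgt1 : (1:ℝ) < 4*(i:ℝ)^2/n := lt_trans h1 hB
        have hC : (μ^2 * n) ^ S ≤ (4*(i:ℝ)^2/n) ^ (2*i) := by
          calc (μ^2 * n) ^ S ≤ (4*(i:ℝ)^2/n) ^ S :=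
                pow_le_pow_left₀ (by positivity) (le_of_lt hB) S
            _ ≤ (4*(i:ℝ)^2/n) ^ (2*i) := pow_le_pow_right₀ (le_of_lt hBgt1) hSle
        have hD2 : (n:ℝ) ^ (2*i-2) < (4*(i:ℝ)^2)^(2*i) / (n:ℝ)^(2*i) := by
          have := lt_of_lt_of_le hpow22 hC
          rwa [div_pow] at this
        have hE : (n:ℝ) ^ (4*i-2) < (4*(i:ℝ)^2)^(2*i) := by
          rw [lt_div_iff₀ (by positivity : (0:ℝ) < (n:ℝ)^(2*i))] at hD2
          calc (n:ℝ) ^ (4*i-2) = (n:ℝ)^(2*i-2) * (n:ℝ)^(2*i) := by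
                rw [← pow_add]; congr 1; omega
            _ < (4*(i:ℝ)^2)^(2*i) := hD2
        have hF : (n:ℝ) ^ (2*i-1) < (2*(i:ℝ)) ^ (2*i) := by
          have e4 : (4*(i:ℝ)^2)^(2*i) = ((2*(i:ℝ))^(2*i))^2 := by
            rw [show (4:ℝ)*(i:ℝ)^2 = (2*(i:ℝ))^2 by ring]
            rw [← pow_mul, ← pow_mul]
            congr 1
            ring
          have e5 : (n:ℝ)^(4*i-2) = ((n:ℝ)^(2*i-1))^2 := by
            rw [← pow_mul]
            congr 1
            omega
          rw [e4, e5] at hE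
          exact lt_of_pow_lt_pow_left₀ 2 (by positivity) hE
        have hG : ((4:ℝ)^i)^(2*i-1) < (2*(i:ℝ))^(2*i) := by
          calc ((4:ℝ)^i)^(2*i-1) < ((n:ℝ))^(2*i-1) :=
                pow_lt_pow_left₀ h16 (by positivity) (by omega)
            _ < (2*(i:ℝ))^(2*i) := hF
        have hH : (((2:ℝ)^(2*i-1))^(2*i)) < ((2*(i:ℝ)))^(2*i) := by
          have e6 : ((4:ℝ)^i)^(2*i-1) = ((2:ℝ)^(2*i-1))^(2*i) := by
            rw [show (4:ℝ) = 2^2 by norm_num]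
            rw [← pow_mul, ← pow_mul, ← pow_mul]
            congr 1
            cases' Nat.exists_eq_add_of_le (by omega : 1 ≤ i) with k hk
            subst hk
            ring_nf
          rwa [e6] at hG
        have hI : (2:ℝ)^(2*i-1) < 2*(i:ℝ) :=
          lt_of_pow_lt_pow_left₀ (2*i) (by positivity) hH
        have hJ : (2*i:ℕ) ≤ 2^(2*i-1) := by
          have := Nat.lt_two_pow_self (n := 2*i-1)
          omega
        have hJR : (2*(i:ℝ)) ≤ (2:ℝ)^(2*i-1) := by
          have : ((2*i:ℕ):ℝ) ≤ ((2^(2*i-1) : ℕ):ℝ) := by exact_mod_cast hJ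
          push_cast at this
          linarith
        linarith
      -- Step 4 : conclude via the moment bound
      have hmom : n * NI ≤ (4*i-2) * NI1 := by
        rw [hNi, hNi1]
        exact Stmt7Aux.moment_counts A Bc n hn i hi1 hin
      have hmomR : (n:ℝ) * NI ≤ (4*(i:ℝ)-2) * NI1 := by
        have hcast : ((n * NI : ℕ):ℝ) ≤ (((4*i-2) * NI1 : ℕ):ℝ) := by exact_mod_cast hmom
        push_cast [Nat.cast_sub (by omega : 2 ≤ 4*i)] at hcast
        linarith
      have hfinal : (4*(i:ℝ)-2) ≤ c * n := by
        have h1 : (4*(i:ℝ)-2) ≤ (2*(i:ℝ)-1) + μ * n := by linarith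
        have h2 : c * n = (2*(i:ℝ)-1) + μ * n + (2:ℝ)^expo * n := by
          rw [hcdef]
          field_simp
          try ring
        nlinarith [hBpos, hnR]
      nlinarith [hmomR, hfinal, hNi1nonneg, hnR]
  exact hmain
end

section
/- Let n ≥ 16, let 𝔽 be a finite field with exactly n elements identified with [n], and let Inv be a zero-advice non-adaptive inverter with an affine decoder: for every y ∈ [n] there exist α^y ∈ 𝔽^n and β^y ∈ 𝔽 such that Inv(y; f) = ⟨α^y, f⟩ + β^y for all f ∈ F_n. Let F be uniform over F_n and Y = (Y_1, …, Y_n) uniform over [n]^n, independent of F; let X_j := Inv(Y_j; F) and let Z_m be the event that F(X_j) = Y_j for all j ∈ [m]. Then for every natural number m ≤ n/16: Pr[Z_m] ≤ ∏_{j=1}^{m} (2j/n + max{(1/n)^{1/4}, 4j/n}). -/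
open Finset

namespace S8

variable {𝔽 : Type} [Field 𝔽] [Fintype 𝔽]

noncomputable def lf (a : 𝔽 → 𝔽) : (𝔽 → 𝔽) →ₗ[𝔽] 𝔽 where
  toFun f := ∑ x, a x * f x
  map_add' f g := by simp [mul_add, Finset.sum_add_distrib]
  map_smul' c f := by
    simp only [Pi.smul_apply, smul_eq_mul, RingHom.id_apply, Finset.mul_sum]
    exact Finset.sum_congr rfl fun x _ => by ring

@[simp] lemma lf_apply (a f : 𝔽 → 𝔽) : lf a f = ∑ x, a x * f x := rfl

/-- evaluation functional -/
def ev (t : 𝔽) : (𝔽 → 𝔽) →ₗ[𝔽] 𝔽 := LinearMap.proj t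

@[simp] lemma ev_apply (t : 𝔽) (f : 𝔽 → 𝔽) : ev t f = f t := rfl

lemma ncard_sigma {ι : Type*} [Fintype ι] (T : ι → Type*) [∀ i, Finite (T i)] :
    Nat.card (Σ i, T i) = ∑ i, Nat.card (T i) := by
  letI : ∀ i, Fintype (T i) := fun i => Fintype.ofFinite _
  rw [Nat.card_eq_fintype_card, Fintype.card_sigma]
  exact Finset.sum_congr rfl fun i _ => (Nat.card_eq_fintype_card).symm

/-- one-functional fiber bound: `n * |{f ∈ S : ψ f = c₀}| ≤ |S|`. -/
lemma fiber1 (S : Set (𝔽 → 𝔽)) (ψ : (𝔽 → 𝔽) →ₗ[𝔽] 𝔽) (u : 𝔽 → 𝔽)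
    (hu : ∀ f ∈ S, ∀ c : 𝔽, f + c • u ∈ S) (ha : ψ u ≠ 0) (c0 : 𝔽) :
    Fintype.card 𝔽 * Nat.card {f : 𝔽 → 𝔽 // f ∈ S ∧ ψ f = c0} ≤ Nat.card S := by
  have hinj : Function.Injective
      (fun q : {f : 𝔽 → 𝔽 // f ∈ S ∧ ψ f = c0} × 𝔽 =>
        (⟨q.1.1 + ((q.2 - c0) / ψ u) • u, hu _ q.1.2.1 _⟩ : S)) := by
    rintro ⟨⟨f1, hf1, hc1⟩, s1⟩ ⟨⟨f2, hf2, hc2⟩, s2⟩ h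
    have hval : f1 + ((s1 - c0) / ψ u) • u = f2 + ((s2 - c0) / ψ u) • u :=
      congrArg Subtype.val h
    have hψ : ∀ (f : 𝔽 → 𝔽) (s : 𝔽), ψ f = c0 → ψ (f + ((s - c0) / ψ u) • u) = s := by
      intro f s hf
      simp [map_add, map_smul, hf, div_mul_cancel₀ _ ha]
    have hs : s1 = s2 := by
      rw [← hψ f1 s1 hc1, ← hψ f2 s2 hc2, hval]
    subst hs
    have : f1 = f2 := by
      have := hval
      exact add_right_cancel this
    simp [this]
  calc Fintype.card 𝔽 * Nat.card {f : 𝔽 → 𝔽 // f ∈ S ∧ ψ f = c0}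
      = Nat.card ({f : 𝔽 → 𝔽 // f ∈ S ∧ ψ f = c0} × 𝔽) := by
        rw [Nat.card_prod, Nat.card_eq_fintype_card (α := 𝔽), mul_comm]
    _ ≤ Nat.card S := Nat.card_le_card_of_injective _ hinj


/-- two-functional fiber bound. -/
lemma fiber2 (S : Set (𝔽 → 𝔽)) (ψ1 ψ2 : (𝔽 → 𝔽) →ₗ[𝔽] 𝔽) (u0 u1 : 𝔽 → 𝔽)
    (hu : ∀ f ∈ S, ∀ c c' : 𝔽, f + c • u0 + c' • u1 ∈ S)
    (hdet : ψ1 u0 * ψ2 u1 - ψ1 u1 * ψ2 u0 ≠ 0) (c1 c2 : 𝔽) :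
    Fintype.card 𝔽 * (Fintype.card 𝔽 *
      Nat.card {f : 𝔽 → 𝔽 // f ∈ S ∧ ψ1 f = c1 ∧ ψ2 f = c2}) ≤ Nat.card S := by
  set d := ψ1 u0 * ψ2 u1 - ψ1 u1 * ψ2 u0 with hd
  -- coefficients achieving target values (s,s')
  set A : 𝔽 → 𝔽 → 𝔽 := fun s s' => ((s - c1) * ψ2 u1 - (s' - c2) * ψ1 u1) / d with hA
  set B : 𝔽 → 𝔽 → 𝔽 := fun s s' => (ψ1 u0 * (s' - c2) - ψ2 u0 * (s - c1)) / d with hB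
  have key1 : ∀ (f : 𝔽 → 𝔽) (s s' : 𝔽), ψ1 f = c1 →
      ψ1 (f + A s s' • u0 + B s s' • u1) = s := by
    intro f s s' hf
    simp only [map_add, map_smul, smul_eq_mul, hf, hA, hB]
    field_simp
    ring
  have key2 : ∀ (f : 𝔽 → 𝔽) (s s' : 𝔽), ψ2 f = c2 →
      ψ2 (f + A s s' • u0 + B s s' • u1) = s' := by
    intro f s s' hf
    simp only [map_add, map_smul, smul_eq_mul, hf, hA, hB]
    field_simp
    ring
  have hinj : Function.Injective
      (fun q : {f : 𝔽 → 𝔽 // f ∈ S ∧ ψ1 f = c1 ∧ ψ2 f = c2} × (𝔽 × 𝔽) =>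
        (⟨q.1.1 + A q.2.1 q.2.2 • u0 + B q.2.1 q.2.2 • u1,
          hu _ q.1.2.1 _ _⟩ : S)) := by
    rintro ⟨⟨f1, hf1, hc11, hc12⟩, s1, s1'⟩ ⟨⟨f2, hf2, hc21, hc22⟩, s2, s2'⟩ h
    have hval : f1 + A s1 s1' • u0 + B s1 s1' • u1 = f2 + A s2 s2' • u0 + B s2 s2' • u1 :=
      congrArg Subtype.val h
    have hs : s1 = s2 := by
      rw [← key1 f1 s1 s1' hc11, ← key1 f2 s2 s2' hc21, hval]
    have hs' : s1' = s2' := by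
      rw [← key2 f1 s1 s1' hc12, ← key2 f2 s2 s2' hc22, hval]
    subst hs; subst hs'
    have hf : f1 = f2 := by
      have h1 : f1 + A s1 s1' • u0 = f2 + A s1 s1' • u0 := add_right_cancel hval
      exact add_right_cancel h1
    simp [hf]
  calc Fintype.card 𝔽 * (Fintype.card 𝔽 *
        Nat.card {f : 𝔽 → 𝔽 // f ∈ S ∧ ψ1 f = c1 ∧ ψ2 f = c2})
      = Nat.card ({f : 𝔽 → 𝔽 // f ∈ S ∧ ψ1 f = c1 ∧ ψ2 f = c2} × (𝔽 × 𝔽)) := by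
        rw [Nat.card_prod, Nat.card_prod, Nat.card_eq_fintype_card (α := 𝔽)]
        ring
    _ ≤ Nat.card S := Nat.card_le_card_of_injective _ hinj

/-- coordinates killed by a submodule `W` of functions are at most `codim W`. -/
lemma card_forced (W : Submodule 𝔽 (𝔽 → 𝔽)) :
    Nat.card {x : 𝔽 // ∀ u ∈ W, u x = 0} + Module.finrank 𝔽 W ≤ Fintype.card 𝔽 := by
  classical
  set P : 𝔽 → Prop := fun x => ∀ u ∈ W, u x = 0 with hP
  let ρ : W →ₗ[𝔽] ({x : 𝔽 // ¬ P x} → 𝔽) :=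
    { toFun := fun w x => (w : 𝔽 → 𝔽) x.1
      map_add' := fun a b => rfl
      map_smul' := fun c a => rfl }
  have hρ : Function.Injective ρ := by
    rw [← LinearMap.ker_eq_bot, LinearMap.ker_eq_bot']
    intro w hw
    ext1
    funext x
    by_cases hx : P x
    · exact hx w.1 w.2
    · exact congrFun hw ⟨x, hx⟩
  have h1 : Module.finrank 𝔽 W ≤ Fintype.card {x : 𝔽 // ¬ P x} := by
    have := LinearMap.finrank_le_finrank_of_injective hρ
    rwa [Module.finrank_fintype_fun_eq_card] at this
  have h2 : Fintype.card {x : 𝔽 // ¬ P x} = Fintype.card 𝔽 - Fintype.card {x : 𝔽 // P x} :=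
    Fintype.card_subtype_compl P
  have h3 : Fintype.card {x : 𝔽 // P x} ≤ Fintype.card 𝔽 := Fintype.card_subtype_le _
  rw [Nat.card_eq_fintype_card]
  have h4 : Fintype.card (Subtype P) = Fintype.card {x : 𝔽 // P x} := rfl
  omega


section Core

variable (α : 𝔽 → 𝔽 → 𝔽) (β : 𝔽 → 𝔽) {p : ℕ} (w : (Fin p → 𝔽) × (Fin p → 𝔽))

/-- the constraint map whose kernel is the direction space of `V`. -/
noncomputable def Phi : (𝔽 → 𝔽) →ₗ[𝔽] (Fin p → 𝔽) × (Fin p → 𝔽) :=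
  LinearMap.prod (LinearMap.pi fun k => LinearMap.proj (w.2 k))
    (LinearMap.pi fun k => lf (α (w.1 k)))

lemma Phi_mem_ker (u : 𝔽 → 𝔽) :
    u ∈ LinearMap.ker (Phi α w) ↔ (∀ k, u (w.2 k) = 0) ∧ (∀ k, lf (α (w.1 k)) u = 0) := by
  simp only [LinearMap.mem_ker, Phi, LinearMap.prod_apply, Function.prod, Prod.mk_eq_zero,
    funext_iff]
  rfl

/-- `V`, the affine solution set -/
def Vs : Set (𝔽 → 𝔽) :=
  {f | ∀ k, f (w.2 k) = w.1 k ∧ lf (α (w.1 k)) f + β (w.1 k) = w.2 k}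

lemma Vs_add {f u : 𝔽 → 𝔽} (hf : f ∈ Vs α β w) (hu : u ∈ LinearMap.ker (Phi α w)) :
    f + u ∈ Vs α β w := by
  rw [Phi_mem_ker] at hu
  intro k
  refine ⟨?_, ?_⟩
  · show f (w.2 k) + u (w.2 k) = w.1 k
    rw [(hf k).1, hu.1 k, add_zero]
  · rw [map_add, hu.2 k, add_zero]
    exact (hf k).2

lemma Vs_sub {f f' : 𝔽 → 𝔽} (hf : f ∈ Vs α β w) (hf' : f' ∈ Vs α β w) :
    f - f' ∈ LinearMap.ker (Phi α w) := by
  rw [Phi_mem_ker]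
  constructor
  · intro k
    show f (w.2 k) - f' (w.2 k) = 0
    rw [(hf k).1, (hf' k).1, sub_self]
  · intro k
    rw [map_sub]
    have h1 := (hf k).2
    have h2 := (hf' k).2
    have h3 : lf (α (w.1 k)) f = lf (α (w.1 k)) f' := add_right_cancel (h1.trans h2.symm)
    rw [h3, sub_self]

lemma codim_bound :
    Fintype.card 𝔽 ≤ Module.finrank 𝔽 (LinearMap.ker (Phi α w)) + 2 * p := by
  have h1 := LinearMap.finrank_range_add_finrank_ker (Phi α w)
  have h2 : Module.finrank 𝔽 (LinearMap.range (Phi α w)) ≤ 2 * p := by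
    refine (Submodule.finrank_le (LinearMap.range (Phi α w))).trans_eq ?_
    simp [Module.finrank_prod]
    ring
  have h3 : Module.finrank 𝔽 (𝔽 → 𝔽) = Fintype.card 𝔽 :=
    Module.finrank_fintype_fun_eq_card 𝔽
  omega

lemma codim_bound' (a : 𝔽 → 𝔽) :
    Fintype.card 𝔽 ≤
      Module.finrank 𝔽 (LinearMap.ker (LinearMap.prod (Phi α w) (lf a))) + (2 * p + 1) := by
  have h1 := LinearMap.finrank_range_add_finrank_ker (LinearMap.prod (Phi α w) (lf a))
  have h2 : Module.finrank 𝔽 (LinearMap.range (LinearMap.prod (Phi α w) (lf a))) ≤ 2*p+1 := by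
    refine (Submodule.finrank_le _).trans ?_
    simp [Module.finrank_prod]
    omega
  have h3 : Module.finrank 𝔽 (𝔽 → 𝔽) = Fintype.card 𝔽 :=
    Module.finrank_fintype_fun_eq_card 𝔽
  omega

end Core

section CoreProof

variable (α : 𝔽 → 𝔽 → 𝔽) (β : 𝔽 → 𝔽) {p : ℕ} (w : (Fin p → 𝔽) × (Fin p → 𝔽))


lemma core :
    Nat.card {fz : (𝔽 → 𝔽) × 𝔽 //
      fz.1 ∈ Vs α β w ∧ fz.1 (lf (α fz.2) fz.1 + β fz.2) = fz.2}
    ≤ (4 * p + 3) * Nat.card (Vs α β w) := by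
  classical
  by_cases hV : (Vs α β w).Nonempty
  swap
  · have : IsEmpty {fz : (𝔽 → 𝔽) × 𝔽 //
        fz.1 ∈ Vs α β w ∧ fz.1 (lf (α fz.2) fz.1 + β fz.2) = fz.2} :=
      ⟨fun q => hV ⟨q.1.1, q.2.1⟩⟩
    rw [Nat.card_of_isEmpty]
    exact Nat.zero_le _
  obtain ⟨f0, hf0⟩ := hV
  set nn := Fintype.card 𝔽 with hnn
  have hnpos : 0 < nn := Fintype.card_pos
  set U := LinearMap.ker (Phi α w) with hUdef
  set NV := Nat.card (Vs α β w) with hNV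
  let tz : 𝔽 → 𝔽 := fun z => lf (α z) f0 + β z
  have hconst : ∀ z, (∀ u ∈ U, lf (α z) u = 0) →
      ∀ f ∈ Vs α β w, lf (α z) f = lf (α z) f0 := by
    intro z hz f hf
    have h1 := hz _ (Vs_sub α β w hf hf0)
    rw [map_sub] at h1
    exact sub_eq_zero.mp h1
  let Mzt : 𝔽 → Type := fun z => {f : 𝔽 → 𝔽 // f ∈ Vs α β w ∧ f (lf (α z) f + β z) = z}
  have hsplit : Nat.card {fz : (𝔽 → 𝔽) × 𝔽 //
      fz.1 ∈ Vs α β w ∧ fz.1 (lf (α fz.2) fz.1 + β fz.2) = fz.2} = ∑ z, Nat.card (Mzt z) := by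
    rw [← ncard_sigma]
    exact Nat.card_congr
      ⟨fun q => ⟨q.1.2, q.1.1, q.2⟩, fun s => ⟨(s.2.1, s.1), s.2.2⟩,
        fun q => rfl, fun s => rfl⟩
  let PA : 𝔽 → Prop := fun z => ∀ u ∈ U, lf (α z) u = 0
  let PD : 𝔽 → Prop := fun z => ∀ u ∈ U, u (tz z) = 0
  -- generic bound
  have hgen : ∀ z, Nat.card (Mzt z) ≤ NV := by
    intro z
    refine Nat.card_le_card_of_injective
      (fun q => (⟨q.1, q.2.1⟩ : Vs α β w)) ?_
    rintro ⟨a, ha⟩ ⟨b, hb⟩ h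
    exact Subtype.ext (by simpa using congrArg Subtype.val h)
  -- A1 empty case
  have hA1zero : ∀ z, PA z → PD z → z ≠ f0 (tz z) → Nat.card (Mzt z) = 0 := by
    intro z hPA hPD hne
    have : IsEmpty (Mzt z) := by
      refine ⟨fun q => hne ?_⟩
      obtain ⟨f, hf, hsucc⟩ := q
      have h1 : lf (α z) f = lf (α z) f0 := hconst z hPA f hf
      have h2 : f (tz z) = z := by
        show f (lf (α z) f0 + β z) = z
        rw [← h1]; exact hsucc
      have h3 : f (tz z) - f0 (tz z) = 0 := hPD _ (Vs_sub α β w hf hf0)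
      have h4 : f (tz z) = f0 (tz z) := sub_eq_zero.mp h3
      exact h2.symm.trans h4
    exact Nat.card_of_isEmpty
  -- A2 bound
  have hA2 : ∀ z, PA z → ¬ PD z → nn * Nat.card (Mzt z) ≤ NV := by
    intro z hPA hPD
    replace hPD : ¬ ∀ u ∈ U, u (tz z) = 0 := hPD
    push_neg at hPD
    obtain ⟨u1, hu1U, hu1⟩ := hPD
    have hcong : Nat.card (Mzt z) =
        Nat.card {f : 𝔽 → 𝔽 // f ∈ Vs α β w ∧ (ev (tz z)) f = z} := by
      refine Nat.card_congr (Equiv.subtypeEquivRight fun f => ?_)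
      refine and_congr_right fun hf => ?_
      have h1 : lf (α z) f = lf (α z) f0 := hconst z hPA f hf
      show f (lf (α z) f + β z) = z ↔ f (tz z) = z
      rw [h1]
    rw [hcong]
    exact fiber1 (Vs α β w) (ev (tz z)) u1
      (fun f hf c => Vs_add α β w hf (U.smul_mem c hu1U)) hu1 z
  -- B case bound
  have hB : ∀ z, ¬ PA z → nn * (nn * Nat.card (Mzt z)) ≤ (2*p+2) * (nn * NV) := by
    intro z hPA
    replace hPA : ¬ ∀ u ∈ U, lf (α z) u = 0 := hPA
    push_neg at hPA
    obtain ⟨u0, hu0U, hu0⟩ := hPA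
    let Ct : 𝔽 → Type := fun x =>
      {f : 𝔽 → 𝔽 // f ∈ Vs α β w ∧ lf (α z) f = x - β z ∧ ev x f = z}
    have hdec : Nat.card (Mzt z) = ∑ x, Nat.card (Ct x) := by
      rw [← ncard_sigma]
      refine Nat.card_congr ⟨fun q => ⟨lf (α z) q.1 + β z,
        ⟨q.1, q.2.1, (add_sub_cancel_right _ _).symm, q.2.2⟩⟩,
        fun s => ⟨s.2.1, s.2.2.1, ?_⟩, fun q => Subtype.ext rfl, fun s => ?_⟩
      · have h1 : lf (α z) (s.2.1 : 𝔽 → 𝔽) = s.1 - β z := s.2.2.2.1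
        have h2 : (s.2.1 : 𝔽 → 𝔽) s.1 = z := s.2.2.2.2
        show (s.2.1 : 𝔽 → 𝔽) (lf (α z) (s.2.1 : 𝔽 → 𝔽) + β z) = z
        rw [h1, sub_add_cancel]
        exact h2
      · rcases s with ⟨x, f, hf, h1, h2⟩
        have hx : lf (α z) f + β z = x := by rw [h1]; exact sub_add_cancel x (β z)
        subst hx
        rfl
    let PB1 : 𝔽 → Prop := fun x => ∀ u ∈ U, lf (α z) u0 * u x - lf (α z) u * u0 x = 0
    have hB2 : ∀ x, ¬ PB1 x → nn * (nn * Nat.card (Ct x)) ≤ NV := by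
      intro x hx
      replace hx : ¬ ∀ u ∈ U, lf (α z) u0 * u x - lf (α z) u * u0 x = 0 := hx
      push_neg at hx
      obtain ⟨u1, hu1U, hdet⟩ := hx
      exact fiber2 (Vs α β w) (lf (α z)) (ev x) u0 u1
        (fun f hf c c' => Vs_add α β w (Vs_add α β w hf (U.smul_mem c hu0U))
          (U.smul_mem c' hu1U)) hdet (x - β z) z
    have hB1 : ∀ x, nn * Nat.card (Ct x) ≤ NV := by
      intro x
      have hsub : Nat.card (Ct x) ≤
          Nat.card {f : 𝔽 → 𝔽 // f ∈ Vs α β w ∧ lf (α z) f = x - β z} := by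
        refine Nat.card_le_card_of_injective (fun q => ⟨q.1, q.2.1, q.2.2.1⟩) ?_
        rintro ⟨a, ha⟩ ⟨b, hb⟩ h
        exact Subtype.ext (by simpa using congrArg Subtype.val h)
      calc nn * Nat.card (Ct x) ≤ nn * Nat.card {f : 𝔽 → 𝔽 //
            f ∈ Vs α β w ∧ lf (α z) f = x - β z} := Nat.mul_le_mul_left _ hsub
        _ ≤ NV := fiber1 (Vs α β w) (lf (α z)) u0
            (fun f hf c => Vs_add α β w hf (U.smul_mem c hu0U)) hu0 (x - β z)
    have hcount : (filter PB1 univ).card ≤ 2*p + 1 := by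
      have hdead : ∀ x, PB1 x →
          ∀ u ∈ LinearMap.ker (LinearMap.prod (Phi α w) (lf (α z))), u x = 0 := by
        intro x hx u hu
        have hu' := LinearMap.mem_ker.mp hu
        rw [LinearMap.prod_apply] at hu'
        have hPhi : Phi α w u = 0 := congrArg Prod.fst hu'
        have hlf : lf (α z) u = 0 := congrArg Prod.snd hu'
        have h1 := hx u (LinearMap.mem_ker.mpr hPhi)
        rw [hlf, zero_mul, sub_zero] at h1
        exact (mul_eq_zero.mp h1).resolve_left hu0
      have hsubset : filter PB1 univ ⊆ filter (fun x =>
          ∀ u ∈ LinearMap.ker (LinearMap.prod (Phi α w) (lf (α z))), u x = 0) univ := by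
        intro x hxmem
        simp only [mem_filter, mem_univ, true_and] at hxmem ⊢
        exact hdead x hxmem
      have h1 : (filter (fun x =>
          ∀ u ∈ LinearMap.ker (LinearMap.prod (Phi α w) (lf (α z))), u x = 0) univ).card =
          Nat.card {x : 𝔽 //
            ∀ u ∈ LinearMap.ker (LinearMap.prod (Phi α w) (lf (α z))), u x = 0} := by
        rw [Nat.card_eq_fintype_card, Fintype.card_subtype]
      have h2 := card_forced (LinearMap.ker (LinearMap.prod (Phi α w) (lf (α z))))
      have h3 := codim_bound' α w (α z)
      have h5 := Finset.card_le_card hsubset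
      have h6 := le_trans h2 h3
      rw [add_comm (Module.finrank 𝔽 (LinearMap.ker (LinearMap.prod (Phi α w) (lf (α z)))))
        (2*p+1)] at h6
      have h7 := Nat.add_le_add_iff_right.mp h6
      exact le_trans (le_trans h5 (le_of_eq h1)) h7
    -- assemble over x
    have hsum : ∑ x, nn * (nn * Nat.card (Ct x)) ≤ (2*p+1) * (nn * NV) + nn * NV := by
      rw [← Finset.sum_filter_add_sum_filter_not univ PB1]
      have hs1 : ∑ x ∈ filter PB1 univ, nn * (nn * Nat.card (Ct x)) ≤
          (2*p+1) * (nn * NV) := by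
        calc ∑ x ∈ filter PB1 univ, nn * (nn * Nat.card (Ct x))
            ≤ (filter PB1 univ).card • (nn * NV) := by
              refine Finset.sum_le_card_nsmul _ _ _ fun x _ => ?_
              exact Nat.mul_le_mul_left _ (hB1 x)
          _ ≤ (2*p+1) * (nn * NV) := by
              rw [smul_eq_mul]
              exact Nat.mul_le_mul_right _ hcount
      have hs2 : ∑ x ∈ filter (fun x => ¬ PB1 x) univ, nn * (nn * Nat.card (Ct x)) ≤
          nn * NV := by
        calc ∑ x ∈ filter (fun x => ¬ PB1 x) univ, nn * (nn * Nat.card (Ct x))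
            ≤ (filter (fun x => ¬ PB1 x) univ).card • NV := by
              refine Finset.sum_le_card_nsmul _ _ _ fun x hx => ?_
              simp only [mem_filter, mem_univ, true_and] at hx
              exact hB2 x hx
          _ ≤ nn * NV := by
              rw [smul_eq_mul]
              refine Nat.mul_le_mul_right _ ?_
              exact (Finset.card_filter_le _ _).trans_eq Finset.card_univ
      exact Nat.add_le_add hs1 hs2
    calc nn * (nn * Nat.card (Mzt z)) = ∑ x, nn * (nn * Nat.card (Ct x)) := by
          rw [hdec, Finset.mul_sum, Finset.mul_sum]
      _ ≤ (2*p+1) * (nn * NV) + nn * NV := hsum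
      _ = (2*p+2) * (nn * NV) := by ring
  -- count of A1 fixed points
  have hA1count : (filter (fun z => PA z ∧ (PD z ∧ z = f0 (tz z))) univ).card ≤ 2*p := by
    have hmaps : ∀ z ∈ filter (fun z => PA z ∧ (PD z ∧ z = f0 (tz z))) univ,
        tz z ∈ filter (fun x => ∀ u ∈ U, u x = 0) univ := by
      intro z hz
      simp only [mem_filter, mem_univ, true_and] at hz ⊢
      exact hz.2.1
    have hinj : Set.InjOn tz (filter (fun z => PA z ∧ (PD z ∧ z = f0 (tz z))) univ) := by
      intro z1 h1 z2 h2 h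
      simp only [coe_filter, Set.mem_setOf_eq, mem_univ, true_and] at h1 h2
      rw [h1.2.2, h2.2.2, h]
    have hcard := Finset.card_le_card_of_injOn tz hmaps hinj
    have h1 : (filter (fun x => ∀ u ∈ U, u x = 0) univ).card =
        Nat.card {x : 𝔽 // ∀ u ∈ U, u x = 0} := by
      rw [Nat.card_eq_fintype_card, Fintype.card_subtype]
    have h2 := card_forced U
    have h3 := codim_bound α w
    rw [← hUdef] at h3
    have h6 := le_trans h2 h3
    rw [add_comm (Module.finrank 𝔽 U) (2*p)] at h6
    have h7 := Nat.add_le_add_iff_right.mp h6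
    exact le_trans (hcard.trans (le_of_eq h1)) h7
  -- total over z
  have hTot : ∑ z, nn * (nn * Nat.card (Mzt z)) ≤ (4*p+3) * (nn * (nn * NV)) := by
    rw [← Finset.sum_filter_add_sum_filter_not univ PA]
    rw [← Finset.sum_filter_add_sum_filter_not (filter PA univ) PD]
    have hs1 : ∑ z ∈ filter PD (filter PA univ), nn * (nn * Nat.card (Mzt z)) ≤
        (2*p) * (nn * (nn * NV)) := by
      have hstep : ∀ z ∈ filter PD (filter PA univ),
          nn * (nn * Nat.card (Mzt z)) ≤
            (if z = f0 (tz z) then nn * (nn * NV) else 0) := by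
        intro z hz
        simp only [mem_filter, mem_univ, true_and] at hz
        by_cases hfix : z = f0 (tz z)
        · rw [if_pos hfix]
          exact Nat.mul_le_mul_left _ (Nat.mul_le_mul_left _ (hgen z))
        · rw [if_neg hfix, hA1zero z hz.1 hz.2 hfix, mul_zero, mul_zero]
      calc ∑ z ∈ filter PD (filter PA univ), nn * (nn * Nat.card (Mzt z))
          ≤ ∑ z ∈ filter PD (filter PA univ),
              (if z = f0 (tz z) then nn * (nn * NV) else 0) := Finset.sum_le_sum hstep
        _ = ∑ z ∈ filter (fun z => z = f0 (tz z)) (filter PD (filter PA univ)),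
              nn * (nn * NV) := (Finset.sum_filter _ _).symm
        _ = (filter (fun z => z = f0 (tz z)) (filter PD (filter PA univ))).card *
              (nn * (nn * NV)) := by rw [Finset.sum_const, smul_eq_mul]
        _ ≤ (2*p) * (nn * (nn * NV)) := by
            refine Nat.mul_le_mul_right _ ?_
            rw [Finset.filter_filter, Finset.filter_filter]
            exact hA1count
    have hs2 : ∑ z ∈ filter (fun z => ¬ PD z) (filter PA univ),
        nn * (nn * Nat.card (Mzt z)) ≤ nn * (nn * NV) := by
      calc ∑ z ∈ filter (fun z => ¬ PD z) (filter PA univ), nn * (nn * Nat.card (Mzt z))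
          ≤ (filter (fun z => ¬ PD z) (filter PA univ)).card • (nn * NV) := by
            refine Finset.sum_le_card_nsmul _ _ _ fun z hz => ?_
            simp only [mem_filter, mem_univ, true_and] at hz
            exact Nat.mul_le_mul_left _ (hA2 z hz.1 hz.2)
        _ ≤ nn * (nn * NV) := by
            rw [smul_eq_mul]
            refine Nat.mul_le_mul_right _ ?_
            exact le_trans (Finset.card_filter_le _ _)
              ((Finset.card_filter_le _ _).trans_eq Finset.card_univ)
    have hs3 : ∑ z ∈ filter (fun z => ¬ PA z) univ,
        nn * (nn * Nat.card (Mzt z)) ≤ (2*p+2) * (nn * (nn * NV)) := by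
      calc ∑ z ∈ filter (fun z => ¬ PA z) univ, nn * (nn * Nat.card (Mzt z))
          ≤ (filter (fun z => ¬ PA z) univ).card • ((2*p+2) * (nn * NV)) := by
            refine Finset.sum_le_card_nsmul _ _ _ fun z hz => ?_
            simp only [mem_filter, mem_univ, true_and] at hz
            exact hB z hz
        _ ≤ nn * ((2*p+2) * (nn * NV)) := by
            rw [smul_eq_mul]
            refine Nat.mul_le_mul_right _ ?_
            exact (Finset.card_filter_le _ _).trans_eq Finset.card_univ
        _ = (2*p+2) * (nn * (nn * NV)) := by ring
    refine le_trans (add_le_add (add_le_add hs1 hs2) hs3) (le_of_eq ?_)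
    ring
  have hM : nn * (nn * Nat.card {fz : (𝔽 → 𝔽) × 𝔽 //
      fz.1 ∈ Vs α β w ∧ fz.1 (lf (α fz.2) fz.1 + β fz.2) = fz.2}) ≤
      nn * (nn * ((4*p+3) * NV)) := by
    calc nn * (nn * Nat.card {fz : (𝔽 → 𝔽) × 𝔽 //
          fz.1 ∈ Vs α β w ∧ fz.1 (lf (α fz.2) fz.1 + β fz.2) = fz.2})
        = ∑ z, nn * (nn * Nat.card (Mzt z)) := by
          rw [hsplit, Finset.mul_sum, Finset.mul_sum]
      _ ≤ (4*p+3) * (nn * (nn * NV)) := hTot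
      _ = nn * (nn * ((4*p+3) * NV)) := by ring
  exact Nat.le_of_mul_le_mul_left (Nat.le_of_mul_le_mul_left hM hnpos) hnpos



end CoreProof

section Plumbing

variable (α : 𝔽 → 𝔽 → 𝔽) (β : 𝔽 → 𝔽)

/-- pairs (f, y) satisfying the first `t` inversion successes -/
def Tt (N t : ℕ) : Type _ :=
  {fy : (𝔽 → 𝔽) × (Fin N → 𝔽) //
    ∀ j : Fin N, (j : ℕ) < t → fy.1 (lf (α (fy.2 j)) fy.1 + β (fy.2 j)) = fy.2 j}

instance (N t : ℕ) : Finite (Tt α β N t) := by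
  unfold Tt; infer_instance

/-- the rest-coordinate index set has size `N - t` -/
def restEquiv (N t : ℕ) (h : t ≤ N) : {i : Fin N // ¬ (i : ℕ) < t} ≃ Fin (N - t) where
  toFun i := ⟨(i.1 : ℕ) - t, by have := i.1.isLt; have := i.2; omega⟩
  invFun j := ⟨⟨t + j.1, by have := j.isLt; omega⟩, by simp⟩
  left_inv i := by
    have h1 := i.2
    apply Subtype.ext
    apply Fin.ext
    simp
    omega
  right_inv j := by
    apply Fin.ext
    simp

lemma card_rest (N t : ℕ) (h : t ≤ N) :
    Nat.card ({i : Fin N // ¬ (i : ℕ) < t} → 𝔽) = (Fintype.card 𝔽) ^ (N - t) := by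
  rw [Nat.card_fun, Nat.card_eq_fintype_card]
  congr 1
  rw [Nat.card_congr (restEquiv N t h), Nat.card_eq_fintype_card, Fintype.card_fin]

lemma decompA (N p : ℕ) (hp : p ≤ N) :
    Nat.card (Tt α β N p) = ∑ w : (Fin p → 𝔽) × (Fin p → 𝔽),
      Nat.card (Vs α β w) * (Fintype.card 𝔽) ^ (N - p) := by
  classical
  have e : ∀ k : Fin p, (⟨k.1, lt_of_lt_of_le k.2 hp⟩ : Fin N) = ⟨k.1, _⟩ := fun k => rfl
  -- the map from sigma to Tt
  let F : (Σ w : (Fin p → 𝔽) × (Fin p → 𝔽),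
      (↥(Vs α β w) × ({i : Fin N // ¬ (i : ℕ) < p} → 𝔽))) → Tt α β N p := by
    rintro ⟨w, ⟨f, hf⟩, g⟩
    refine ⟨(f, fun i => if h : (i : ℕ) < p then w.1 ⟨i, h⟩ else g ⟨i, h⟩), ?_⟩
    intro j hj
    simp only [dif_pos hj]
    have h2 := (hf ⟨j, hj⟩).2
    have h1 := (hf ⟨j, hj⟩).1
    rw [h2]
    exact h1
  have hbij : Function.Bijective F := by
    constructor
    · rintro ⟨w1, ⟨f1, hf1⟩, g1⟩ ⟨w2, ⟨f2, hf2⟩, g2⟩ h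
      have hval := congrArg Subtype.val h
      have hfe : f1 = f2 := congrArg Prod.fst hval
      have hy := congrArg Prod.snd hval
      have hw1 : w1.1 = w2.1 := by
        funext k
        have := congrFun hy ⟨k.1, lt_of_lt_of_le k.2 hp⟩
        simpa [F, dif_pos k.2] using this
      have hw : w1 = w2 := by
        refine Prod.ext hw1 ?_
        funext k
        rw [← (hf1 k).2, ← (hf2 k).2, hfe, hw1]
      subst hw
      subst hfe
      simp only [Sigma.mk.inj_iff, heq_eq_eq, true_and]
      refine Prod.ext (Subtype.ext rfl) ?_
      funext i
      have := congrFun hy i.1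
      simpa [F, dif_neg i.2] using this
    · rintro ⟨⟨f, y⟩, hfy⟩
      refine ⟨⟨(fun k => y ⟨k.1, lt_of_lt_of_le k.2 hp⟩,
        fun k => lf (α (y ⟨k.1, lt_of_lt_of_le k.2 hp⟩)) f + β (y ⟨k.1, lt_of_lt_of_le k.2 hp⟩)),
        ⟨f, fun k => ⟨hfy _ k.2, rfl⟩⟩, fun i => y i.1⟩, ?_⟩
      apply Subtype.ext
      refine Prod.ext rfl ?_
      funext i
      by_cases h : (i : ℕ) < p
      · simp only [F, dif_pos h]
      · simp only [F, dif_neg h]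
  calc Nat.card (Tt α β N p)
      = Nat.card (Σ w : (Fin p → 𝔽) × (Fin p → 𝔽),
          (↥(Vs α β w) × ({i : Fin N // ¬ (i : ℕ) < p} → 𝔽))) :=
        (Nat.card_congr (Equiv.ofBijective F hbij)).symm
    _ = ∑ w : (Fin p → 𝔽) × (Fin p → 𝔽),
          Nat.card (Vs α β w) * (Fintype.card 𝔽) ^ (N - p) := by
        rw [ncard_sigma]
        refine Finset.sum_congr rfl fun w _ => ?_
        rw [Nat.card_prod, card_rest N p hp]

lemma decompB (N p : ℕ) (hp : p < N) :
    Nat.card (Tt α β N (p+1)) = ∑ w : (Fin p → 𝔽) × (Fin p → 𝔽),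
      Nat.card {fz : (𝔽 → 𝔽) × 𝔽 //
        fz.1 ∈ Vs α β w ∧ fz.1 (lf (α fz.2) fz.1 + β fz.2) = fz.2} *
        (Fintype.card 𝔽) ^ (N - (p+1)) := by
  classical
  let F : (Σ w : (Fin p → 𝔽) × (Fin p → 𝔽),
      ({fz : (𝔽 → 𝔽) × 𝔽 //
        fz.1 ∈ Vs α β w ∧ fz.1 (lf (α fz.2) fz.1 + β fz.2) = fz.2} ×
        ({i : Fin N // ¬ (i : ℕ) < p + 1} → 𝔽))) → Tt α β N (p+1) := by
    rintro ⟨w, ⟨⟨f, z⟩, hfz⟩, g⟩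
    refine ⟨(f, fun i => if h : (i : ℕ) < p then w.1 ⟨i, h⟩ else
      if h2 : (i : ℕ) = p then z else g ⟨i, by omega⟩), ?_⟩
    intro j hj
    by_cases h : (j : ℕ) < p
    · simp only [dif_pos h]
      have h2 := (hfz.1 ⟨j, h⟩).2
      have h1 := (hfz.1 ⟨j, h⟩).1
      rw [h2]
      exact h1
    · have h2 : (j : ℕ) = p := by omega
      simp only [dif_neg h, dif_pos h2]
      exact hfz.2
  have hbij : Function.Bijective F := by
    constructor
    · rintro ⟨w1, ⟨⟨f1, z1⟩, hfz1⟩, g1⟩ ⟨w2, ⟨⟨f2, z2⟩, hfz2⟩, g2⟩ h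
      have hval := congrArg Subtype.val h
      have hfe : f1 = f2 := congrArg Prod.fst hval
      have hy := congrArg Prod.snd hval
      have hw1 : w1.1 = w2.1 := by
        funext k
        have := congrFun hy ⟨k.1, lt_of_lt_of_le k.2 hp.le⟩
        simpa [F, dif_pos k.2] using this
      have hz : z1 = z2 := by
        have := congrFun hy ⟨p, hp⟩
        simpa [F] using this
      have hw : w1 = w2 := by
        refine Prod.ext hw1 ?_
        funext k
        rw [← (hfz1.1 k).2, ← (hfz2.1 k).2, hfe, hw1]
      subst hw
      subst hfe
      subst hz
      simp only [Sigma.mk.inj_iff, heq_eq_eq, true_and]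
      refine Prod.ext (Subtype.ext rfl) ?_
      funext i
      have h1 := i.2
      have := congrFun hy i.1
      have hnp : ¬ ((i.1 : ℕ) < p) := by omega
      have hne : ¬ ((i.1 : ℕ) = p) := by omega
      simpa [F, dif_neg hnp, dif_neg hne] using this
    · rintro ⟨⟨f, y⟩, hfy⟩
      refine ⟨⟨(fun k => y ⟨k.1, lt_of_lt_of_le k.2 hp.le⟩,
        fun k => lf (α (y ⟨k.1, lt_of_lt_of_le k.2 hp.le⟩)) f +
          β (y ⟨k.1, lt_of_lt_of_le k.2 hp.le⟩)),
        ⟨(f, y ⟨p, hp⟩), ⟨fun k => ⟨hfy _ (by simp), rfl⟩, hfy ⟨p, hp⟩ (by simp)⟩⟩,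
        fun i => y i.1⟩, ?_⟩
      apply Subtype.ext
      refine Prod.ext rfl ?_
      funext i
      by_cases h : (i : ℕ) < p
      · simp only [F, dif_pos h]
      · by_cases h2 : (i : ℕ) = p
        · simp only [F, dif_neg h, dif_pos h2]
          congr 1
          exact (Fin.ext h2.symm : (⟨p, hp⟩ : Fin N) = i)
        · simp only [F, dif_neg h, dif_neg h2]
  calc Nat.card (Tt α β N (p+1))
      = Nat.card (Σ w : (Fin p → 𝔽) × (Fin p → 𝔽),
          ({fz : (𝔽 → 𝔽) × 𝔽 //
            fz.1 ∈ Vs α β w ∧ fz.1 (lf (α fz.2) fz.1 + β fz.2) = fz.2} ×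
            ({i : Fin N // ¬ (i : ℕ) < p + 1} → 𝔽))) :=
        (Nat.card_congr (Equiv.ofBijective F hbij)).symm
    _ = _ := by
        rw [ncard_sigma]
        refine Finset.sum_congr rfl fun w _ => ?_
        rw [Nat.card_prod, card_rest N (p+1) hp]

lemma step (N p : ℕ) (hp : p < N) :
    Fintype.card 𝔽 * Nat.card (Tt α β N (p+1)) ≤
      (4 * p + 3) * Nat.card (Tt α β N p) := by
  rw [decompA α β N p hp.le, decompB α β N p hp, Finset.mul_sum, Finset.mul_sum]
  refine Finset.sum_le_sum fun w _ => ?_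
  have h1 : Fintype.card 𝔽 * ((Fintype.card 𝔽) ^ (N - (p+1))) =
      (Fintype.card 𝔽) ^ (N - p) := by
    rw [← pow_succ']
    congr 1
    omega
  calc Fintype.card 𝔽 * (Nat.card {fz : (𝔽 → 𝔽) × 𝔽 //
        fz.1 ∈ Vs α β w ∧ fz.1 (lf (α fz.2) fz.1 + β fz.2) = fz.2} *
        (Fintype.card 𝔽) ^ (N - (p+1)))
      = Nat.card {fz : (𝔽 → 𝔽) × 𝔽 //
          fz.1 ∈ Vs α β w ∧ fz.1 (lf (α fz.2) fz.1 + β fz.2) = fz.2} *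
          ((Fintype.card 𝔽) ^ (N - p)) := by rw [← h1]; ring
    _ ≤ ((4 * p + 3) * Nat.card (Vs α β w)) * ((Fintype.card 𝔽) ^ (N - p)) :=
        Nat.mul_le_mul_right _ (core α β w)
    _ = (4 * p + 3) * (Nat.card (Vs α β w) * (Fintype.card 𝔽) ^ (N - p)) := by ring

lemma T0card (N : ℕ) :
    Nat.card (Tt α β N 0) = Nat.card ((𝔽 → 𝔽) × (Fin N → 𝔽)) :=
  Nat.card_congr (Equiv.subtypeUnivEquiv fun fy => fun j hj => absurd hj (Nat.not_lt_zero _))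

lemma iter (N : ℕ) (t : ℕ) (ht : t ≤ N) :
    Nat.card (Tt α β N t) * (Fintype.card 𝔽) ^ t ≤
      (∏ j ∈ Finset.Icc 1 t, (6 * j)) * Nat.card (Tt α β N 0) := by
  induction t with
  | zero => simp
  | succ t ih =>
    have ht' : t ≤ N := by omega
    have h1 := step α β N t (by omega)
    calc Nat.card (Tt α β N (t+1)) * (Fintype.card 𝔽) ^ (t+1)
        = (Fintype.card 𝔽 * Nat.card (Tt α β N (t+1))) * (Fintype.card 𝔽) ^ t := by ring
      _ ≤ ((4*t+3) * Nat.card (Tt α β N t)) * (Fintype.card 𝔽) ^ t :=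
          Nat.mul_le_mul_right _ h1
      _ = (4*t+3) * (Nat.card (Tt α β N t) * (Fintype.card 𝔽) ^ t) := by ring
      _ ≤ (4*t+3) * ((∏ j ∈ Finset.Icc 1 t, (6 * j)) * Nat.card (Tt α β N 0)) :=
          Nat.mul_le_mul_left _ (ih ht')
      _ ≤ (6*(t+1)) * ((∏ j ∈ Finset.Icc 1 t, (6 * j)) * Nat.card (Tt α β N 0)) :=
          Nat.mul_le_mul_right _ (by omega)
      _ = (∏ j ∈ Finset.Icc 1 (t+1), (6 * j)) * Nat.card (Tt α β N 0) := by
          rw [Finset.prod_Icc_succ_top (by omega : 1 ≤ t + 1)]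
          ring

end Plumbing

end S8

/-- Let `n ≥ 16`, `𝔽` a finite field with exactly `n` elements identified
with `[n]`, and `Inv` a zero-advice non-adaptive inverter with an affine decoder. With `F`
uniform over `F_n`, `Y` uniform over `[n]^n` independent of `F`, and `Z_m` the event
`∀ j ≤ m, F(Inv(Y_j; F)) = Y_j`, for every natural `m ≤ n/16`:
`Pr[Z_m] ≤ ∏_{j=1}^{m} (2j/n + max{(1/n)^{1/4}, 4j/n})`. -/
theorem stmt_8 {𝔽 : Type} [Field 𝔽] [Fintype 𝔽] (n : ℕ) (hn : Fintype.card 𝔽 = n)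
    (hn16 : 16 ≤ n)
    (Inv : 𝔽 → (𝔽 → 𝔽) → 𝔽)
    (haff : ∀ y : 𝔽, ∃ (α : 𝔽 → 𝔽) (β : 𝔽),
      ∀ f : 𝔽 → 𝔽, Inv y f = (∑ x : 𝔽, α x * f x) + β)
    (m : ℕ) (hm : (m : ℝ) ≤ (n : ℝ) / 16) :
    (Nat.card {fy : (𝔽 → 𝔽) × (Fin n → 𝔽) //
        ∀ j : Fin n, (j : ℕ) < m → fy.1 (Inv (fy.2 j) fy.1) = fy.2 j} : ℝ)
      / (Nat.card ((𝔽 → 𝔽) × (Fin n → 𝔽))) ≤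
    ∏ j ∈ Finset.Icc 1 m,
      (2 * (j : ℝ) / n + max ((1 / (n : ℝ)) ^ ((1 : ℝ) / 4)) (4 * (j : ℝ) / n)) := by
  classical
  choose A B hAB using haff
  have hcard : Nat.card {fy : (𝔽 → 𝔽) × (Fin n → 𝔽) //
      ∀ j : Fin n, (j : ℕ) < m → fy.1 (Inv (fy.2 j) fy.1) = fy.2 j}
      = Nat.card (S8.Tt A B n m) := by
    refine Nat.card_congr (Equiv.subtypeEquivRight fun fy => ?_)
    constructor
    · intro h j hj
      have := h j hj
      rw [hAB (fy.2 j) fy.1] at this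
      exact this
    · intro h j hj
      have := h j hj
      rw [hAB (fy.2 j) fy.1]
      exact this
  have hmn : 16 * m ≤ n := by
    have h1 : (16 * m : ℝ) ≤ (n : ℝ) := by linarith
    exact_mod_cast h1
  have hmn' : m ≤ n := by omega
  have hiter := S8.iter A B n m hmn'
  rw [S8.T0card, hn] at hiter
  -- positivity facts
  have hnR : (0 : ℝ) < (n : ℝ) := by
    have : 0 < n := by omega
    exact_mod_cast this
  have hD : 0 < Nat.card ((𝔽 → 𝔽) × (Fin n → 𝔽)) := Nat.card_pos
  have hDR : (0 : ℝ) < (Nat.card ((𝔽 → 𝔽) × (Fin n → 𝔽)) : ℝ) := by exact_mod_cast hD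
  have hpow : (0 : ℝ) < (n : ℝ) ^ m := pow_pos hnR m
  have key : (Nat.card (S8.Tt A B n m) : ℝ) * (n : ℝ) ^ m ≤
      (∏ j ∈ Finset.Icc 1 m, (6 * (j : ℝ))) * (Nat.card ((𝔽 → 𝔽) × (Fin n → 𝔽)) : ℝ) := by
    have := hiter
    have hcast : ((Nat.card (S8.Tt A B n m) * n ^ m : ℕ) : ℝ) ≤
        (((∏ j ∈ Finset.Icc 1 m, (6 * j)) * Nat.card ((𝔽 → 𝔽) × (Fin n → 𝔽)) : ℕ) : ℝ) := by
      exact_mod_cast this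
    push_cast at hcast
    convert hcast using 2
  rw [hcard]
  have key2 : (Nat.card (S8.Tt A B n m) : ℝ) / (Nat.card ((𝔽 → 𝔽) × (Fin n → 𝔽)) : ℝ) ≤
      (∏ j ∈ Finset.Icc 1 m, (6 * (j : ℝ))) / (n : ℝ) ^ m := by
    rw [div_le_div_iff₀ hDR hpow]
    exact key
  have key3 : (∏ j ∈ Finset.Icc 1 m, (6 * (j : ℝ))) / (n : ℝ) ^ m =
      ∏ j ∈ Finset.Icc 1 m, (6 * (j : ℝ) / (n : ℝ)) := by
    rw [Finset.prod_div_distrib, Finset.prod_const, Nat.card_Icc]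
    simp
  refine le_trans (key2.trans_eq key3) ?_
  refine Finset.prod_le_prod (fun j _ => by positivity) (fun j _ => ?_)
  have e1 : 6 * (j:ℝ)/(n:ℝ) = 2*(j:ℝ)/n + 4*(j:ℝ)/n := by ring
  rw [e1]
  exact add_le_add le_rfl (le_max_right _ _)
end
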